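/- arXiv:0809.3063 — 6 statements merged into one kernel-verified Lean document; each statement's English description precedes it below -/
import Mathlib

section
/- Let R be one of the fields ℚ, ℝ, or ℂ, let H(t) = 1 + r_1 t + r_2 t² + ⋯ ∈ R[[t]], and let w_0, …, w_n be pairwise distinct integers. Then the formal Laurent series S_H(w_0,…,w_n;t) = Σ_{i=0}^{n} Π_{j≠i} F_H((w_j − w_i)t) has vanishing coefficients in all negative degrees (i.e. it lies in R[[t]]), and its constant term equals h_n = [H(t)^{n+1}]_n, the coefficient of t^n in H(t)^{n+1}. -/
noncomputable section

namespace RigidGenus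

variable {R : Type*} [Field R]

/-- Termwise substitution `t ↦ w·t` on Laurent series: the coefficient of `t^k`
is multiplied by `w^k`. -/
def zscale (w : R) (f : LaurentSeries R) : LaurentSeries R where
  coeff k := w ^ k * f.coeff k
  isPWO_support' := f.isPWO_support'.mono (fun k hk => by
    simp only [Function.mem_support, ne_eq] at hk ⊢
    exact fun h => hk (by rw [h, mul_zero]))

/-- Termwise derivative of a Laurent series: `(∑ f_k t^k)' = ∑ k f_k t^(k-1)`. -/
def lderiv (f : LaurentSeries R) : LaurentSeries R where
  coeff k := ((k + 1 : ℤ) : R) * f.coeff (k + 1)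
  isPWO_support' := by
    have himg : ((fun k : ℤ => k - 1) '' (Function.support f.coeff)).IsPWO :=
      f.isPWO_support'.image_of_monotone (fun a b h => sub_le_sub_right h 1)
    refine himg.mono (fun k hk => ?_)
    simp only [Function.mem_support, ne_eq] at hk
    exact ⟨k + 1, fun h => hk (by rw [h, mul_zero]), by ring⟩

/-- `F_H = H(t)/t`, as a formal Laurent series. -/
def FH (H : PowerSeries R) : LaurentSeries R :=
  HahnSeries.single (-1 : ℤ) (1 : R) * HahnSeries.ofPowerSeries ℤ R H

/-- `S_H(w_0,…,w_n;t) = ∑_i ∏_{j ≠ i} F_H((w_j - w_i) t)`. -/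
def SH (H : PowerSeries R) {n : ℕ} (w : Fin (n + 1) → ℤ) : LaurentSeries R :=
  ∑ i : Fin (n + 1), ∏ j ∈ Finset.univ.erase i, zscale ((w j - w i : ℤ) : R) (FH H)

/-- `H` is `n`-algebraically rigid: for all `1 ≤ m ≤ n` and pairwise distinct
integers `w_0, …, w_m`, the Laurent series `S_H(w_0,…,w_m;t)` is constant. -/
def AlgRigid (H : PowerSeries R) (n : ℕ) : Prop :=
  ∀ m : ℕ, 1 ≤ m → m ≤ n → ∀ w : Fin (m + 1) → ℤ, Function.Injective w →
    ∀ k : ℤ, k ≠ 0 → (SH H w).coeff k = 0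

/-- The formal exponential series `exp (a t)`. -/
def expS (a : R) : PowerSeries R := PowerSeries.mk fun n => a ^ n / n.factorial

/-- The formal sine series `sin (a t)`. -/
def sinS (a : R) : PowerSeries R :=
  PowerSeries.mk fun n => if n % 2 = 1 then (-1 : R) ^ (n / 2) * a ^ n / n.factorial else 0

/-- The formal cosine series `cos (a t)`. -/
def cosS (a : R) : PowerSeries R :=
  PowerSeries.mk fun n => if n % 2 = 0 then (-1 : R) ^ (n / 2) * a ^ n / n.factorial else 0

/-- `H = D_{a,b}`, the generalized Todd series `t(a·coth(at)+b)`: for `a ≠ 0` it is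
characterized by `D_{a,b}(t)·(e^{at} - e^{-at}) = t·(a(e^{at}+e^{-at}) + b(e^{at}-e^{-at}))`,
and `D_{0,b}(t) = 1 + bt`. -/
def IsDab (a b : R) (H : PowerSeries R) : Prop :=
  (a ≠ 0 ∧ H * (expS a - expS (-a)) =
      PowerSeries.X * (PowerSeries.C a * (expS a + expS (-a)) +
        PowerSeries.C b * (expS a - expS (-a)))) ∨
  (a = 0 ∧ H = 1 + PowerSeries.C b * PowerSeries.X)

/-- `H = G_{a,b}`, the series `t(a·cot(at)+b)`: for `a ≠ 0` it is characterized by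
`G_{a,b}(t)·sin(at) = t·(a·cos(at) + b·sin(at))`, and `G_{0,b}(t) = 1 + bt`. -/
def IsGab (a b : R) (H : PowerSeries R) : Prop :=
  (a ≠ 0 ∧ H * sinS a =
      PowerSeries.X * (PowerSeries.C a * cosS a + PowerSeries.C b * sinS a)) ∨
  (a = 0 ∧ H = 1 + PowerSeries.C b * PowerSeries.X)


section Helpers

open Finset Polynomial

/-- Key Lagrange-interpolation identity: for distinct nodes `x i` and exponents
`m j - 1 ≥ -1` with `∑ m = d ≤ n`, the "sum of residues" vanishes unless `d = n`. -/
lemma key_lagrange {F : Type*} [Field F] {n : ℕ} (x : Fin (n+1) → F)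
    (hx : Function.Injective x)
    (m : Fin (n+1) → ℕ) (d : ℕ) (hsum : ∑ j, m j = d) (hdn : d ≤ n) :
    ∑ i ∈ Finset.univ.filter (fun i => m i = 0),
      ∏ j ∈ Finset.univ.erase i, (x j - x i) ^ ((m j : ℤ) - 1)
      = if d = n then 1 else 0 := by
  classical
  set P : Finset (Fin (n+1)) := Finset.univ.filter (fun i => m i = 0) with hP
  set Pc : Finset (Fin (n+1)) := Finset.univ.filter (fun i => ¬ m i = 0) with hPc
  have hcard : P.card + Pc.card = n + 1 := by
    rw [hP, hPc]
    rw [Finset.card_filter_add_card_filter_not]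
    simp
  have hPc_le : Pc.card ≤ d := by
    calc Pc.card = ∑ j ∈ Pc, (1:ℕ) := by simp
    _ ≤ ∑ j ∈ Pc, m j := Finset.sum_le_sum (fun j hj => by
        simp [hPc] at hj; omega)
    _ ≤ ∑ j, m j := Finset.sum_le_sum_of_subset (f := m) (Finset.subset_univ _)
    _ = d := hsum
  have hsumPc : ∑ j ∈ Pc, m j = d := by
    rw [← hsum]
    refine Finset.sum_subset (f := m) (Finset.subset_univ _) ?_
    intro j _ hj
    simpa [hPc] using hj
  -- nodes
  set v : Fin (n+1) → F := fun i => - x i with hv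
  have hvinj : Function.Injective v := fun a b h => hx (neg_injective h)
  have hvs : Set.InjOn v P := hvinj.injOn
  -- the polynomial N
  set N : F[X] := ∏ j ∈ Pc, (X - C (- x j)) ^ (m j - 1) with hN
  have hNmonic : N.Monic := monic_prod_of_monic _ _ (fun j _ => (monic_X_sub_C _).pow _)
  have hNdeg : N.natDegree + Pc.card = d := by
    have : N.natDegree = ∑ j ∈ Pc, (m j - 1) := by
      rw [hN, natDegree_prod _ _ (fun j _ => pow_ne_zero _ (X_sub_C_ne_zero _))]
      refine Finset.sum_congr rfl (fun j _ => ?_)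
      rw [natDegree_pow, natDegree_X_sub_C, mul_one]
    rw [this, Finset.card_eq_sum_ones, ← Finset.sum_add_distrib, ← hsumPc]
    refine Finset.sum_congr rfl (fun j hj => ?_)
    have : m j ≠ 0 := by simpa [hPc] using hj
    omega
  have hNne : N ≠ 0 := hNmonic.ne_zero
  have hdeglt : N.degree < (P.card : ℕ) := by
    rw [degree_eq_natDegree hNne]
    exact_mod_cast (by omega : N.natDegree < P.card)
  have hinterp := Lagrange.eq_interpolate (f := N) hvs hdeglt
  have hcoeff := congrArg (fun p : F[X] => p.coeff (P.card - 1)) hinterp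
  simp only [Lagrange.interpolate_apply, Polynomial.finset_sum_coeff,
    Polynomial.coeff_C_mul] at hcoeff
  -- RHS coefficient
  have hRHS : N.coeff (P.card - 1) = if d = n then 1 else 0 := by
    by_cases hdn' : d = n
    · have hdeq : N.natDegree = P.card - 1 := by omega
      rw [if_pos hdn', ← hdeq]
      exact hNmonic.coeff_natDegree
    · rw [if_neg hdn']
      apply Polynomial.coeff_eq_zero_of_natDegree_lt
      have : d < n := lt_of_le_of_ne hdn hdn'
      omega
  -- basis coefficient
  have hbasis : ∀ i ∈ P, (Lagrange.basis P v i).coeff (P.card - 1)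
      = ∏ j ∈ P.erase i, (v i - v j)⁻¹ := by
    intro i hi
    have h1 : (Lagrange.basis P v i).coeff (P.card - 1) = (Lagrange.basis P v i).leadingCoeff := by
      rw [Polynomial.leadingCoeff, Lagrange.natDegree_basis hvs hi]
    rw [h1, Lagrange.basis, Polynomial.leadingCoeff_prod]
    refine Finset.prod_congr rfl (fun j hj => ?_)
    rw [Lagrange.basisDivisor, Polynomial.leadingCoeff_mul, Polynomial.leadingCoeff_C,
      (Polynomial.monic_X_sub_C _).leadingCoeff, mul_one]
  rw [hRHS] at hcoeff
  rw [hcoeff]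
  refine Finset.sum_congr rfl (fun i hi => ?_)
  -- split univ.erase i
  have hiP : m i = 0 := by simpa [hP] using hi
  have hsplit : Finset.univ.erase i = Pc ∪ P.erase i := by
    ext j
    simp only [Finset.mem_erase, Finset.mem_union, Finset.mem_filter, Finset.mem_univ,
      true_and, hP, hPc]
    constructor
    · intro ⟨hji, _⟩
      by_cases hmj : m j = 0
      · exact Or.inr ⟨hji, hmj⟩
      · exact Or.inl hmj
    · rintro (hmj | ⟨hji, hmj⟩)
      · exact ⟨fun h => hmj (h ▸ hiP), trivial⟩
      · exact ⟨hji, trivial⟩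
  have hdisj : Disjoint Pc (P.erase i) := by
    rw [Finset.disjoint_left]
    intro j hj hj'
    have h1 : ¬ m j = 0 := by simpa [hPc] using hj
    have h2 : m j = 0 := by
      have := Finset.mem_of_mem_erase hj'
      simpa [hP] using this
    exact h1 h2
  rw [hbasis i hi, hsplit, Finset.prod_union hdisj]
  congr 1
  · -- Pc part equals N.eval (v i)
    rw [hN, Polynomial.eval_prod]
    refine Finset.prod_congr rfl (fun j hj => ?_)
    have hmj : m j ≠ 0 := by simpa [hPc] using hj
    rw [Polynomial.eval_pow, Polynomial.eval_sub, Polynomial.eval_X, Polynomial.eval_C]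
    have hexp : (m j : ℤ) - 1 = ((m j - 1 : ℕ) : ℤ) := by omega
    rw [hexp, zpow_natCast]
    congr 1
    simp only [hv]
    ring
  · refine Finset.prod_congr rfl (fun j hj => ?_)
    have hmj : m j = 0 := by
      have := Finset.mem_of_mem_erase hj
      simpa [hP] using this
    simp only [hmj, Nat.cast_zero, zero_sub, zpow_neg, zpow_one]
    congr 1
    simp only [hv]
    ring

lemma antidiag_erase {n d : ℕ} (i : Fin (n+1)) :
    Finset.finsuppAntidiag (Finset.univ.erase i) d
      = (Finset.finsuppAntidiag (Finset.univ : Finset (Fin (n+1))) d).filter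
          (fun l => l i = 0) := by
  ext l
  simp only [Finset.mem_finsuppAntidiag, Finset.mem_filter]
  constructor
  · rintro ⟨hsum, hsupp⟩
    have hli : l i = 0 := by
      by_contra h
      exact (Finset.notMem_erase i _) (hsupp (Finsupp.mem_support_iff.mpr h))
    refine ⟨⟨?_, hsupp.trans (Finset.erase_subset _ _)⟩, hli⟩
    rw [← Finset.sum_erase_add _ _ (Finset.mem_univ i)]
    simpa [hli] using hsum
  · rintro ⟨⟨hsum, _⟩, hli⟩
    constructor
    · rw [← Finset.sum_erase_add _ _ (Finset.mem_univ i)] at hsum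
      simpa [hli] using hsum
    · intro j hj
      rw [Finset.mem_erase]
      exact ⟨fun h => (Finsupp.mem_support_iff.mp hj) (h ▸ hli), Finset.mem_univ j⟩

lemma main_sum {F : Type*} [Field F] (H : PowerSeries F)
    (hH : PowerSeries.constantCoeff H = 1) {n : ℕ}
    (x : Fin (n+1) → F) (hx : Function.Injective x) (d : ℕ) (hdn : d ≤ n) :
    ∑ i : Fin (n+1), (∏ j ∈ Finset.univ.erase i, (x j - x i)⁻¹) *
        PowerSeries.coeff d (∏ j ∈ Finset.univ.erase i, PowerSeries.rescale (x j - x i) H)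
      = if d = n then PowerSeries.coeff n (H ^ (n+1)) else 0 := by
  classical
  have hxne : ∀ ⦃i j : Fin (n+1)⦄, j ≠ i → x j - x i ≠ 0 := fun i j h => by
    exact sub_ne_zero_of_ne (fun he => h (hx he))
  -- rewrite each summand
  have step1 : ∀ i : Fin (n+1),
      (∏ j ∈ Finset.univ.erase i, (x j - x i)⁻¹) *
        PowerSeries.coeff d (∏ j ∈ Finset.univ.erase i, PowerSeries.rescale (x j - x i) H)
      = ∑ l ∈ (Finset.finsuppAntidiag (Finset.univ : Finset (Fin (n+1))) d).filter
            (fun l => l i = 0),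
          ∏ j ∈ Finset.univ.erase i,
            ((x j - x i) ^ ((l j : ℤ) - 1) * PowerSeries.coeff (l j) H) := by
    intro i
    rw [PowerSeries.coeff_prod, ← antidiag_erase, Finset.mul_sum]
    refine Finset.sum_congr rfl (fun l hl => ?_)
    rw [← Finset.prod_mul_distrib]
    refine Finset.prod_congr rfl (fun j hj => ?_)
    rw [PowerSeries.coeff_rescale]
    have hne : x j - x i ≠ 0 := hxne (Finset.mem_erase.mp hj).1
    rw [← mul_assoc]
    congr 1
    rw [zpow_sub_one₀ hne, zpow_natCast, mul_comm]
  simp only [step1]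
  -- swap summation order
  rw [Finset.sum_comm' (t' := Finset.finsuppAntidiag (Finset.univ : Finset (Fin (n+1))) d)
    (s' := fun l => Finset.univ.filter (fun i => l i = 0))]
  · have step2 : ∀ l ∈ Finset.finsuppAntidiag (Finset.univ : Finset (Fin (n+1))) d,
        ∑ i ∈ Finset.univ.filter (fun i => l i = 0),
          ∏ j ∈ Finset.univ.erase i,
            ((x j - x i) ^ ((l j : ℤ) - 1) * PowerSeries.coeff (l j) H)
        = (if d = n then 1 else 0) * ∏ j : Fin (n+1), PowerSeries.coeff (l j) H := by
      intro l hl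
      rw [Finset.mem_finsuppAntidiag] at hl
      have hsum : ∑ j, l j = d := hl.1
      calc ∑ i ∈ Finset.univ.filter (fun i => l i = 0),
            ∏ j ∈ Finset.univ.erase i,
              ((x j - x i) ^ ((l j : ℤ) - 1) * PowerSeries.coeff (l j) H)
          = ∑ i ∈ Finset.univ.filter (fun i => l i = 0),
            (∏ j ∈ Finset.univ.erase i, (x j - x i) ^ ((l j : ℤ) - 1)) *
              ∏ j : Fin (n+1), PowerSeries.coeff (l j) H := by
            refine Finset.sum_congr rfl (fun i hi => ?_)
            rw [Finset.prod_mul_distrib]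
            congr 1
            refine Finset.prod_erase _ ?_
            have hli : l i = 0 := (Finset.mem_filter.mp hi).2
            rw [hli, PowerSeries.coeff_zero_eq_constantCoeff, hH]
        _ = _ := by
            rw [← Finset.sum_mul, key_lagrange x hx (fun j => l j) d hsum hdn]
    rw [Finset.sum_congr rfl step2]
    by_cases hd : d = n
    · simp only [hd, if_true, one_mul]
      have hpow : (H : PowerSeries F) ^ (n+1) = ∏ _j : Fin (n+1), H := by
        rw [Finset.prod_const, Finset.card_univ, Fintype.card_fin]
      rw [hpow, PowerSeries.coeff_prod]
    · simp [hd]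
  · intro i l
    simp only [Finset.mem_filter, Finset.mem_univ, true_and, and_comm]

lemma ofPS_coeff_neg {F : Type*} [Field F] (P : PowerSeries F) {k : ℤ} (hk : k < 0) :
    (HahnSeries.ofPowerSeries ℤ F P).coeff k = 0 := by
  rw [HahnSeries.ofPowerSeries_apply, HahnSeries.embDomain_notin_range]
  rintro ⟨m, hm⟩
  subst hm
  simp at hk
  omega

lemma single_mul_ofPS_coeff {F : Type*} [Field F] (e : ℤ) (c : F) (P : PowerSeries F) (k : ℤ) :
    (HahnSeries.single e c * HahnSeries.ofPowerSeries ℤ F P).coeff k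
      = if k - e < 0 then 0 else c * PowerSeries.coeff (k - e).toNat P := by
  have h : (HahnSeries.single e c * HahnSeries.ofPowerSeries ℤ F P).coeff k
      = c * (HahnSeries.ofPowerSeries ℤ F P).coeff (k - e) := by
    conv_lhs => rw [show k = (k - e) + e by ring]
    exact HahnSeries.coeff_single_mul_add
  rw [h]
  by_cases hke : k - e < 0
  · rw [if_pos hke, ofPS_coeff_neg P hke, mul_zero]
  · rw [if_neg hke]
    congr 1
    conv_lhs => rw [show (k - e) = ((k - e).toNat : ℤ) from (Int.toNat_of_nonneg (not_lt.mp hke)).symm]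
    rw [HahnSeries.ofPowerSeries_apply_coeff]

lemma zscale_FH {F : Type*} [Field F] {u : F} (hu : u ≠ 0) (H : PowerSeries F) :
    zscale u (FH H) = HahnSeries.single (-1 : ℤ) u⁻¹ *
      HahnSeries.ofPowerSeries ℤ F (PowerSeries.rescale u H) := by
  ext k
  show u ^ k * (FH H).coeff k = _
  rw [FH, single_mul_ofPS_coeff, single_mul_ofPS_coeff]
  by_cases hk : k - (-1) < 0
  · rw [if_pos hk, if_pos hk, mul_zero]
  · rw [if_neg hk, if_neg hk, PowerSeries.coeff_rescale, one_mul]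
    have h1 : ((k - (-1)).toNat : ℤ) = k + 1 := Int.toNat_of_nonneg (by omega)
    have h2 : u ^ ((k - (-1)).toNat) = u ^ (k + 1 : ℤ) := by
      rw [← zpow_natCast, h1]
    have h3 : u ^ k = u ^ (k + 1 : ℤ) * u⁻¹ := by
      rw [← zpow_sub_one₀ hu]
      norm_num
    rw [← mul_assoc]
    congr 1
    rw [h3, h2, mul_comm]

lemma prod_single_mul_ofPS {F : Type*} [Field F] {ι : Type*} (s : Finset ι) (c : ι → F)
    (P : ι → PowerSeries F) :
    ∏ j ∈ s, (HahnSeries.single (-1 : ℤ) (c j) * HahnSeries.ofPowerSeries ℤ F (P j))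
      = HahnSeries.single (-(s.card : ℤ)) (∏ j ∈ s, c j) *
          HahnSeries.ofPowerSeries ℤ F (∏ j ∈ s, P j) := by
  classical
  induction s using Finset.cons_induction with
  | empty =>
      simp only [Finset.prod_empty, Finset.card_empty, Nat.cast_zero, neg_zero, map_one, mul_one,
        HahnSeries.single_zero_one]
  | cons a s ha ih =>
      rw [Finset.prod_cons, ih, Finset.prod_cons, Finset.prod_cons, Finset.card_cons,
        mul_mul_mul_comm, HahnSeries.single_mul_single, ← map_mul]
      have he : (-1 : ℤ) + -(s.card : ℤ) = -(((s.card + 1 : ℕ)) : ℤ) := by push_cast; ring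
      rw [he]

end Helpers

/-- Proposition 2.1: for `H = 1 + r₁t + ⋯` and pairwise distinct integers
`w₀, …, w_n`, the Laurent series `S_H(w₀,…,w_n;t)` has vanishing coefficients in all
negative degrees, and its constant term is `h_n = [H^{n+1}]_n`. -/
theorem SH_mem_powerSeries_and_constant_term {R : Type*} [Field R] [CharZero R]
    (H : PowerSeries R) (hH : PowerSeries.constantCoeff H = 1)
    {n : ℕ} (w : Fin (n + 1) → ℤ) (hw : Function.Injective w) :
    (∀ k : ℤ, k < 0 → (SH H w).coeff k = 0) ∧
      (SH H w).coeff 0 = PowerSeries.coeff n (H ^ (n + 1)) := by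
  classical
  set x : Fin (n+1) → R := fun i => ((w i : ℤ) : R) with hxdef
  have hxinj : Function.Injective x := fun a b h =>
    hw (Int.cast_injective (α := R) (by simpa [hxdef] using h))
  have hxne : ∀ ⦃i j : Fin (n+1)⦄, j ≠ i → x j - x i ≠ 0 := fun i j h =>
    sub_ne_zero_of_ne (fun he => h (hxinj he))
  have hprod : ∀ i : Fin (n+1),
      (∏ j ∈ Finset.univ.erase i, zscale ((w j - w i : ℤ) : R) (FH H))
      = HahnSeries.single (-(n:ℤ)) (∏ j ∈ Finset.univ.erase i, (x j - x i)⁻¹) *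
        HahnSeries.ofPowerSeries ℤ R
          (∏ j ∈ Finset.univ.erase i, PowerSeries.rescale (x j - x i) H) := by
    intro i
    have h1 : ∀ j ∈ Finset.univ.erase i,
        zscale ((w j - w i : ℤ) : R) (FH H)
        = HahnSeries.single (-1 : ℤ) ((x j - x i)⁻¹) *
          HahnSeries.ofPowerSeries ℤ R (PowerSeries.rescale (x j - x i) H) := by
      intro j hj
      have hj' : j ≠ i := (Finset.mem_erase.mp hj).1
      have hcast : ((w j - w i : ℤ) : R) = x j - x i := by
        simp only [hxdef]
        push_cast
        ring
      rw [hcast]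
      exact zscale_FH (hxne hj') H
    rw [Finset.prod_congr rfl h1, prod_single_mul_ofPS]
    have hc : (Finset.univ.erase i).card = n := by
      rw [Finset.card_erase_of_mem (Finset.mem_univ i), Finset.card_univ, Fintype.card_fin]
      omega
    rw [hc]
  have hSH : ∀ k : ℤ, (SH H w).coeff k
      = ∑ i : Fin (n+1), (if k + n < 0 then 0 else
          (∏ j ∈ Finset.univ.erase i, (x j - x i)⁻¹) *
            PowerSeries.coeff (k + n).toNat
              (∏ j ∈ Finset.univ.erase i, PowerSeries.rescale (x j - x i) H)) := by
    intro k
    rw [SH]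
    have hadd := map_sum (HahnSeries.coeff.addMonoidHom k)
      (fun i : Fin (n+1) =>
        ∏ j ∈ Finset.univ.erase i, zscale ((w j - w i : ℤ) : R) (FH H)) Finset.univ
    rw [show ((∑ i : Fin (n+1),
        ∏ j ∈ Finset.univ.erase i, zscale ((w j - w i : ℤ) : R) (FH H)).coeff k)
      = ∑ i : Fin (n+1),
        (∏ j ∈ Finset.univ.erase i, zscale ((w j - w i : ℤ) : R) (FH H)).coeff k from hadd]
    refine Finset.sum_congr rfl (fun i _ => ?_)
    rw [hprod i, single_mul_ofPS_coeff]
    rw [show k - -(n:ℤ) = k + n by ring]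
  constructor
  · intro k hk
    rw [hSH k]
    by_cases hkn : k + (n:ℤ) < 0
    · simp [hkn]
    · simp only [if_neg hkn]
      have hd : (k + (n:ℤ)).toNat ≤ n := by omega
      rw [main_sum H hH x hxinj _ hd]
      have hne : (k + (n:ℤ)).toNat ≠ n := by omega
      simp [hne]
  · rw [hSH 0]
    have h0 : ¬ ((0:ℤ) + n < 0) := by omega
    simp only [if_neg h0]
    rw [main_sum H hH x hxinj _ (by omega : ((0:ℤ)+n).toNat ≤ n)]
    simp [show ((0:ℤ)+(n:ℤ)).toNat = n by omega]

end RigidGenus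
end
end

section
/- Let R be one of the fields ℚ, ℝ, or ℂ and let H(t) = 1 + r_1 t + r_2 t² + ⋯ ∈ R[[t]] be 1-algebraically rigid, i.e. for all distinct integers w_0, w_1 the series S_H(w_0,w_1;t) is constant. Then F_H(−t) = h_1 − F_H(t) as formal Laurent series, where h_1 = [H²]_1 = 2r_1 and F_H(−t) denotes the Laurent series whose coefficient of t^k is (−1)^k times that of F_H. -/
noncomputable section

namespace RigidGenus

variable {R : Type*} [Field R]

/-- if `H = 1 + r₁t + ⋯` is 1-algebraically rigid, then
`F_H(−t) = h₁ − F_H(t)`, where `h₁ = [H²]₁ = 2r₁`. -/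
theorem FH_neg_of_algRigid_one {R : Type*} [Field R] [CharZero R]
    (H : PowerSeries R) (hH : PowerSeries.constantCoeff H = 1)
    (hrig : AlgRigid H 1) :
    zscale (-1 : R) (FH H)
        = (HahnSeries.C (PowerSeries.coeff 1 (H ^ 2)) : LaurentSeries R) - FH H ∧
      PowerSeries.coeff 1 (H ^ 2) = 2 * PowerSeries.coeff 1 H := by

  -- Key facts
  have hFH0 : (FH H).coeff 0 = PowerSeries.coeff 1 H := by
    have h1 := HahnSeries.coeff_single_mul_add (r := (1:R))
      (x := HahnSeries.ofPowerSeries ℤ R H) (a := (1:ℤ)) (b := (-1:ℤ))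
    rw [show (1:ℤ) + (-1) = 0 by ring, one_mul] at h1
    rw [FH, h1, show (1:ℤ) = ((1:ℕ):ℤ) by norm_num,
      HahnSeries.ofPowerSeries_apply_coeff]
  have hkey : ∀ k : ℤ, k ≠ 0 → (1:R) ^ k * (FH H).coeff k + (-1:R) ^ k * (FH H).coeff k = 0 := by
    intro k hk
    have hinj : Function.Injective (![0, 1] : Fin 2 → ℤ) := by decide
    have := hrig 1 le_rfl le_rfl ![0, 1] hinj k hk
    have he0 : (Finset.univ.erase (0 : Fin 2)) = {1} := by decide
    have he1 : (Finset.univ.erase (1 : Fin 2)) = {0} := by decide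
    rw [SH, Fin.sum_univ_two, he0, he1, Finset.prod_singleton, Finset.prod_singleton] at this
    simpa [zscale, HahnSeries.coeff_add] using this
  have hh1 : PowerSeries.coeff 1 (H ^ 2) = 2 * PowerSeries.coeff 1 H := by
    rw [sq, PowerSeries.coeff_mul,
      show Finset.HasAntidiagonal.antidiagonal (1:ℕ) = {(0,1),(1,0)} from by decide,
      Finset.sum_pair (by decide)]
    simp only [PowerSeries.coeff_zero_eq_constantCoeff, hH]
    ring
  refine ⟨?_, hh1⟩
  ext k
  rcases eq_or_ne k 0 with rfl | hk
  · show (-1:R) ^ (0:ℤ) * (FH H).coeff 0 = _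
    have hC : (HahnSeries.C (PowerSeries.coeff 1 (H ^ 2)) : LaurentSeries R).coeff (0:ℤ)
        = PowerSeries.coeff 1 (H ^ 2) := by
      simp [HahnSeries.C_apply]
    rw [HahnSeries.coeff_sub, hC, hh1, hFH0, zpow_zero, one_mul]
    ring
  · have h := hkey k hk
    rw [one_zpow, one_mul] at h
    show (-1:R) ^ k * (FH H).coeff k = _
    have hC : (HahnSeries.C (PowerSeries.coeff 1 (H ^ 2)) : LaurentSeries R).coeff k = 0 := by
      simp [HahnSeries.C_apply, HahnSeries.coeff_single_of_ne hk]
    rw [HahnSeries.coeff_sub, hC]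
    linear_combination h

end RigidGenus
end
end

section
/- Let R be one of the fields ℚ, ℝ, or ℂ and let H(t) = 1 + r_1 t + r_2 t² + ⋯ ∈ R[[t]] be 1-algebraically rigid. Then r_{2k+1} = 0 for all k ≥ 1; equivalently, the power series H(t) − r_1 t is even. -/
noncomputable section

namespace RigidGenus

variable {R : Type*} [Field R]

lemma FH_coeff_nonneg (H : PowerSeries R) (n : ℕ) :
    (FH H).coeff (n : ℤ) = PowerSeries.coeff (n + 1) H := by
  have : (n : ℤ) = ((n : ℤ) + 1) + (-1) := by ring
  rw [FH, mul_comm, this, HahnSeries.coeff_mul_single_add, mul_one]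
  have h2 : ((n : ℤ) + 1) = ((n + 1 : ℕ) : ℤ) := by push_cast; ring
  rw [h2, HahnSeries.ofPowerSeries_apply_coeff]

/-- if `H = 1 + r₁t + ⋯` is 1-algebraically rigid, then `r_{2k+1} = 0`
for all `k ≥ 1`, i.e. `H(t) − r₁t` is even. -/
theorem odd_coeff_eq_zero_of_algRigid_one {R : Type*} [Field R] [CharZero R]
    (H : PowerSeries R) (hH : PowerSeries.constantCoeff H = 1)
    (hrig : AlgRigid H 1) :
    ∀ k : ℕ, 1 ≤ k → PowerSeries.coeff (2 * k + 1) H = 0 := by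
  intro k hk
  have hw : Function.Injective (![0, 1] : Fin 2 → ℤ) := by
    intro a b hab
    fin_cases a <;> fin_cases b <;> simp_all
  have hk2 : ((2 * k : ℕ) : ℤ) ≠ 0 := by positivity
  have h := hrig 1 le_rfl le_rfl ![0, 1] hw ((2 * k : ℕ) : ℤ) hk2
  have e0 : (Finset.univ.erase (0 : Fin 2)) = {1} := by decide
  have e1 : (Finset.univ.erase (1 : Fin 2)) = {0} := by decide
  rw [SH, Fin.sum_univ_two, e0, e1, Finset.prod_singleton, Finset.prod_singleton] at h
  simp only [HahnSeries.coeff_add] at h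
  have hz : ∀ w : R, (zscale w (FH H)).coeff ((2 * k : ℕ) : ℤ)
      = w ^ ((2 * k : ℕ) : ℤ) * (FH H).coeff ((2 * k : ℕ) : ℤ) := fun w => rfl
  rw [hz, hz, FH_coeff_nonneg] at h
  simp only [Matrix.cons_val_one, Matrix.head_cons, Matrix.cons_val_zero] at h
  norm_num at h
  have hm : ((-1 : R)) ^ (2 * (k : ℤ)) = 1 := by
    rw [zpow_mul]; norm_num
  rw [hm, one_mul] at h
  have : (2 : R) * PowerSeries.coeff (2 * k + 1) H = 0 := by linear_combination h
  have h2 : (2 : R) ≠ 0 := two_ne_zero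
  exact (mul_eq_zero.mp this).resolve_left h2
end RigidGenus
end
end

section
/- Let R be one of the fields ℚ, ℝ, or ℂ and let H(t) = 1 + r_1 t + r_2 t² + ⋯ ∈ R[[t]] be 2-algebraically rigid. Then F_H(−t)² + h_1·F_H(t) + F_H′(t) = h_2 as formal Laurent series, where h_1 = [H²]_1, h_2 = [H³]_2, F_H(−t) is the Laurent series whose coefficient of t^k is (−1)^k times that of F_H, and F_H′ is the termwise derivative Σ_k k f_k t^{k−1} of F_H = Σ_k f_k t^k. -/
noncomputable section

namespace RigidGenus

variable {R : Type*} [Field R]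

section AuxRigid
variable {R : Type*} [Field R]
open Polynomial

theorem ofPS_coeff (G : PowerSeries R) (z : ℤ) :
    (HahnSeries.ofPowerSeries ℤ R G).coeff z =
      if 0 ≤ z then PowerSeries.coeff z.toNat G else 0 := by
  split_ifs with h
  · have hz : z = ((z.toNat : ℕ) : ℤ) := (Int.toNat_of_nonneg h).symm
    conv_lhs => rw [hz]
    rw [HahnSeries.ofPowerSeries_apply_coeff]
  · rw [HahnSeries.ofPowerSeries_apply, HahnSeries.embDomain_notin_range]
    rintro ⟨n, hn⟩
    have hn : (n : ℤ) = z := hn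
    omega

def shift (d : ℕ) (G : PowerSeries R) : LaurentSeries R :=
  HahnSeries.single (-(d : ℤ)) 1 * HahnSeries.ofPowerSeries ℤ R G

theorem shift_coeff (d : ℕ) (G : PowerSeries R) (k : ℤ) :
    (shift d G).coeff k =
      if 0 ≤ k + d then PowerSeries.coeff (k + d).toNat G else 0 := by
  have h1 : k = (k + d) + -(d : ℤ) := by ring
  rw [shift]
  conv_lhs => rw [h1]
  rw [HahnSeries.coeff_single_mul_add, one_mul, ofPS_coeff]

theorem shift_coeff_nat (d : ℕ) (G : PowerSeries R) (m : ℕ) :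
    (shift d G).coeff ((m : ℤ) - d) = PowerSeries.coeff m G := by
  have h : ((m : ℤ) - d) + d = m := by ring
  rw [shift_coeff, h]
  simp

theorem shift_injective (d : ℕ) : Function.Injective (shift (R := R) d) :=
  fun G G' h => PowerSeries.ext fun m => by
    rw [← shift_coeff_nat d G m, h, shift_coeff_nat]

theorem shift_mul (d e : ℕ) (G G' : PowerSeries R) :
    shift d G * shift e G' = shift (d + e) (G * G') := by
  rw [shift, shift, shift, map_mul, mul_mul_mul_comm, HahnSeries.single_mul_single, one_mul]
  congr 2
  push_cast
  ring

theorem shift_add (d : ℕ) (G G' : PowerSeries R) :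
    shift d G + shift d G' = shift d (G + G') := by
  rw [shift, shift, shift, map_add, mul_add]

theorem shift_X (d : ℕ) (G : PowerSeries R) :
    shift (d + 1) (PowerSeries.X * G) = shift d G := by
  rw [shift, shift, map_mul, HahnSeries.ofPowerSeries_X, ← mul_assoc,
    HahnSeries.single_mul_single, one_mul]
  congr 2
  push_cast
  ring

theorem shift_one_mul (G G' : PowerSeries R) :
    shift 1 G * shift 1 G' = shift 2 (G * G') := by
  rw [shift_mul]

theorem shift_X_two (G : PowerSeries R) :
    shift 2 (PowerSeries.X * G) = shift 1 G := by
  rw [show (2 : ℕ) = 1 + 1 from rfl, shift_X]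

theorem shift_C (c : R) :
    shift 2 (PowerSeries.C c * PowerSeries.X ^ 2) = HahnSeries.C c := by
  have h : PowerSeries.C c * PowerSeries.X ^ 2 =
      PowerSeries.X * (PowerSeries.X * PowerSeries.C c) := by ring
  rw [h, shift_X_two, show (1 : ℕ) = 0 + 1 from rfl, shift_X, shift,
    HahnSeries.ofPowerSeries_C]
  simp

theorem FH_eq_shift (H : PowerSeries R) : FH H = shift 1 H := by
  unfold FH shift
  norm_num

theorem zscale_shift (c : R) (hc : c ≠ 0) (G : PowerSeries R) :
    zscale c (shift 1 G) =
      shift 1 (PowerSeries.C c⁻¹ * PowerSeries.rescale c G) := by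
  ext k
  show c ^ k * (shift 1 G).coeff k = _
  rw [shift_coeff, shift_coeff]
  split_ifs with h
  · rw [PowerSeries.coeff_C_mul, PowerSeries.coeff_rescale]
    have hk : (((k + (1 : ℕ)).toNat : ℤ)) = k + 1 := Int.toNat_of_nonneg (by push_cast at h ⊢; omega)
    have hc2 : c ^ ((k + (1 : ℕ)).toNat) = c ^ k * c := by
      rw [← zpow_natCast c, hk]
      rw [zpow_add_one₀ hc]
    rw [hc2]
    field_simp
  · rw [mul_zero]

theorem lderiv_shift (G : PowerSeries R) :
    lderiv (shift 1 G) =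
      shift 2 (PowerSeries.mk fun m => ((m : R) - 1) * PowerSeries.coeff m G) := by
  ext k
  show ((k + 1 : ℤ) : R) * (shift 1 G).coeff (k + 1) = _
  rw [shift_coeff, shift_coeff]
  have h2 : k + 1 + ((1 : ℕ) : ℤ) = k + ((2 : ℕ) : ℤ) := by push_cast; ring
  rw [h2]
  split_ifs with h
  · rw [PowerSeries.coeff_mk]
    have hk : (((k + (2 : ℕ)).toNat : ℤ)) = k + 2 := Int.toNat_of_nonneg h
    have hcast : (((k + (2 : ℕ)).toNat : ℕ) : R) = (k : R) + 2 := by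
      have := congrArg (fun z : ℤ => (z : R)) hk
      push_cast at this
      exact this
    rw [hcast]
    push_cast
    ring
  · rw [mul_zero]

theorem C_mul_shift (c : R) (d : ℕ) (G : PowerSeries R) :
    (HahnSeries.C c : LaurentSeries R) * shift d G = shift d (PowerSeries.C c * G) := by
  rw [shift, shift, ← HahnSeries.ofPowerSeries_C (Γ := ℤ), map_mul, mul_left_comm]

def Bpoly (m a b : ℕ) : R[X] :=
  (X - 1) * X ^ b - C ((-1 : R) ^ a) * (X * (X - 1) ^ b)
    + C ((-1 : R) ^ m) * (X ^ a * (X - 1) ^ b)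

def Pm (H : PowerSeries R) (m : ℕ) : R[X] :=
  ∑ p ∈ Finset.HasAntidiagonal.antidiagonal m,
    C (PowerSeries.coeff p.1 H * PowerSeries.coeff p.2 H) * Bpoly m p.1 p.2

def Wx (H : PowerSeries R) (x : R) : PowerSeries R :=
  PowerSeries.C (x - 1) * (H * PowerSeries.rescale x H)
    - PowerSeries.C x * (PowerSeries.rescale (-1) H * PowerSeries.rescale (x - 1) H)
    + PowerSeries.rescale (-x) H * PowerSeries.rescale (1 - x) H

theorem coeff_Wx (H : PowerSeries R) (x : R) (m : ℕ) :
    PowerSeries.coeff m (Wx H x) = (Pm H m).eval x := by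
  rw [Wx, Pm]
  rw [map_add, map_sub, PowerSeries.coeff_C_mul, PowerSeries.coeff_C_mul,
    PowerSeries.coeff_mul, PowerSeries.coeff_mul, PowerSeries.coeff_mul,
    Polynomial.eval_finset_sum, Finset.mul_sum, Finset.mul_sum,
    ← Finset.sum_sub_distrib, ← Finset.sum_add_distrib]
  refine Finset.sum_congr rfl fun p hp => ?_
  have hm : p.1 + p.2 = m := Finset.HasAntidiagonal.mem_antidiagonal.mp hp
  simp only [PowerSeries.coeff_rescale, Bpoly, eval_mul, eval_add, eval_sub, eval_pow, eval_X,
    eval_one, eval_C]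
  have h1 : (-x) ^ p.1 = (-1 : R) ^ p.1 * x ^ p.1 := by rw [neg_pow]
  have h2 : (1 - x) ^ p.2 = (-1 : R) ^ p.2 * (x - 1) ^ p.2 := by
    rw [show (1 - x : R) = -(x - 1) by ring, neg_pow]
  have h3 : (-1 : R) ^ p.1 * (-1 : R) ^ p.2 = (-1 : R) ^ m := by rw [← pow_add, hm]
  rw [h1, h2]
  calc (x - 1) * ((PowerSeries.coeff p.1) H * (x ^ p.2 * (PowerSeries.coeff p.2) H))
        - x * ((-1 : R) ^ p.1 * (PowerSeries.coeff p.1) H *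
            ((x - 1) ^ p.2 * (PowerSeries.coeff p.2) H))
        + (-1 : R) ^ p.1 * x ^ p.1 * (PowerSeries.coeff p.1) H *
            ((-1 : R) ^ p.2 * (x - 1) ^ p.2 * (PowerSeries.coeff p.2) H)
      = (PowerSeries.coeff p.1 H * PowerSeries.coeff p.2 H) *
          ((x - 1) * x ^ p.2 - (-1 : R) ^ p.1 * (x * (x - 1) ^ p.2)
            + ((-1 : R) ^ p.1 * (-1 : R) ^ p.2) * (x ^ p.1 * (x - 1) ^ p.2)) := by ring
    _ = _ := by rw [h3]

theorem deriv_Bpoly_eval_one (m a b : ℕ) :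
    (Polynomial.derivative (Bpoly m a b : R[X])).eval 1
      = 1 - (-1 : R) ^ a * ((if b = 0 then 1 else 0) + (if b = 1 then 1 else 0))
        + (-1 : R) ^ m *
            ((a : R) * (if b = 0 then 1 else 0) + (if b = 1 then 1 else 0)) := by
  match b with
  | 0 =>
    simp [Bpoly, Polynomial.derivative_mul, Polynomial.derivative_pow]
    try ring
  | 1 =>
    simp [Bpoly, Polynomial.derivative_mul, Polynomial.derivative_pow]
    try ring
  | (b + 2) =>
    simp [Bpoly, Polynomial.derivative_mul, Polynomial.derivative_pow, zero_pow]
    try ring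

theorem star (H : PowerSeries R) (h0 : PowerSeries.coeff 0 H = 1) (m : ℕ)
    (hP : Pm H m = (0 : R[X])) :
    (∑ p ∈ Finset.HasAntidiagonal.antidiagonal m, PowerSeries.coeff p.1 H * PowerSeries.coeff p.2 H)
      + (-1 : R) ^ m * ((m : R) - 1) * PowerSeries.coeff m H
      + (if m = 0 then 0
          else 2 * (-1 : R) ^ m * PowerSeries.coeff (m - 1) H * PowerSeries.coeff 1 H)
      = 0 := by
  classical
  set h : ℕ → R := fun i => PowerSeries.coeff i H with hh
  have hD : (Polynomial.derivative (Pm H m)).eval (1 : R) = 0 := by rw [hP]; simp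
  rw [Pm, derivative_sum, eval_finset_sum] at hD
  have hterm : ∀ p ∈ Finset.HasAntidiagonal.antidiagonal m,
      (Polynomial.derivative (C (h p.1 * h p.2) * Bpoly m p.1 p.2)).eval 1
        = h p.1 * h p.2
          + h p.1 * h p.2 * ((-1 : R) ^ m * p.1 - (-1 : R) ^ p.1) *
              (if p.2 = 0 then 1 else 0)
          + h p.1 * h p.2 * ((-1 : R) ^ m - (-1 : R) ^ p.1) *
              (if p.2 = 1 then 1 else 0) := by
    intro p _
    rw [derivative_C_mul, eval_mul, eval_C, deriv_Bpoly_eval_one]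
    ring
  rw [Finset.sum_congr rfl hterm, Finset.sum_add_distrib, Finset.sum_add_distrib] at hD
  have hs0 : (∑ p ∈ Finset.HasAntidiagonal.antidiagonal m,
      h p.1 * h p.2 * ((-1 : R) ^ m * p.1 - (-1 : R) ^ p.1) * (if p.2 = 0 then 1 else 0))
      = (-1 : R) ^ m * ((m : R) - 1) * h m := by
    rw [Finset.sum_eq_single_of_mem (m, 0) (by simp)]
    · simp [hh, h0]; ring
    · intro p hp hne
      have h1 : p.1 + p.2 = m := Finset.HasAntidiagonal.mem_antidiagonal.mp hp
      have h2 : p.2 ≠ 0 := by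
        intro h2; apply hne; ext
        · simp; omega
        · exact h2
      rw [if_neg h2, mul_zero]
  have hs1 : (∑ p ∈ Finset.HasAntidiagonal.antidiagonal m,
      h p.1 * h p.2 * ((-1 : R) ^ m - (-1 : R) ^ p.1) * (if p.2 = 1 then 1 else 0))
      = (if m = 0 then 0
          else 2 * (-1 : R) ^ m * h (m - 1) * h 1) := by
    by_cases hm : m = 0
    · subst hm
      rw [if_pos rfl]
      apply Finset.sum_eq_zero
      intro p hp
      have h1 : p.1 + p.2 = 0 := Finset.HasAntidiagonal.mem_antidiagonal.mp hp
      have h2 : p.2 ≠ 1 := by omega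
      rw [if_neg h2, mul_zero]
    · obtain ⟨k, rfl⟩ : ∃ k, m = k + 1 := ⟨m - 1, by omega⟩
      rw [if_neg hm]
      rw [Finset.sum_eq_single_of_mem (k, 1) (by simp)]
      · simp [pow_succ]
        ring
      · intro p hp hne
        have h1 : p.1 + p.2 = k + 1 := Finset.HasAntidiagonal.mem_antidiagonal.mp hp
        have h2 : p.2 ≠ 1 := by
          intro h2; apply hne; ext
          · simp; omega
          · simp [h2]
        rw [if_neg h2, mul_zero]
  rw [hs0, hs1] at hD
  exact hD

def Tm (H : PowerSeries R) (u v : ℤ) : PowerSeries R :=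
  (PowerSeries.C ((u : R))⁻¹ * PowerSeries.rescale ((u : ℤ) : R) H) *
    (PowerSeries.C ((v : R))⁻¹ * PowerSeries.rescale ((v : ℤ) : R) H)

theorem C_mul_helper (a b c : R) (f g : PowerSeries R) :
    PowerSeries.C a * ((PowerSeries.C b * f) * (PowerSeries.C c * g))
      = PowerSeries.C (a * b * c) * (f * g) := by
  rw [map_mul, map_mul]
  ring

theorem Wx_eq (H : PowerSeries R) (u : ℤ) (hu0 : ((u : ℤ) : R) ≠ 0)
    (hu1 : ((u : ℤ) : R) - 1 ≠ 0) :
    Wx H ((u : ℤ) : R)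
      = PowerSeries.C (((u : ℤ) : R) * (((u : ℤ) : R) - 1)) *
          (Tm H 1 u + Tm H (-1) (u - 1) + Tm H (-u) (1 - u)) := by
  set x : R := ((u : ℤ) : R) with hx
  have t1 : PowerSeries.C (x * (x - 1)) * Tm H 1 u
      = PowerSeries.C (x - 1) * (H * PowerSeries.rescale x H) := by
    rw [Tm, C_mul_helper]
    push_cast
    rw [PowerSeries.rescale_one]
    simp only [RingHom.id_apply]
    congr 1
    rw [← hx]
    field_simp
  have t2 : PowerSeries.C (x * (x - 1)) * Tm H (-1) (u - 1)
      = -(PowerSeries.C x *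
          (PowerSeries.rescale (-1) H * PowerSeries.rescale (x - 1) H)) := by
    rw [Tm, C_mul_helper]
    push_cast
    rw [← hx]
    have hc : x * (x - 1) * ((-1 : R))⁻¹ * (x - 1)⁻¹ = -x := by
      field_simp
    rw [hc, map_neg, neg_mul]
  have t3 : PowerSeries.C (x * (x - 1)) * Tm H (-u) (1 - u)
      = PowerSeries.rescale (-x) H * PowerSeries.rescale (1 - x) H := by
    rw [Tm, C_mul_helper]
    push_cast
    rw [← hx]
    have hc : x * (x - 1) * (-x)⁻¹ * (1 - x)⁻¹ = 1 := by
      have h1x : (1 : R) - x ≠ 0 := fun h => hu1 (by rw [sub_eq_zero] at h ⊢; exact h.symm)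
      field_simp
      ring
    rw [hc, map_one, one_mul]
  rw [mul_add, mul_add, t1, t2, t3, Wx]
  ring

end AuxRigid


section AuxRigid2
variable {R : Type*} [Field R]
open Polynomial

theorem SH3_eq [CharZero R] (H : PowerSeries R) (w : Fin 3 → ℤ)
    (hinj : Function.Injective w) :
    SH H w = shift 2 (Tm H (w 1 - w 0) (w 2 - w 0) + Tm H (w 0 - w 1) (w 2 - w 1)
      + Tm H (w 0 - w 2) (w 1 - w 2)) := by
  have hne : ∀ i j : Fin 3, i ≠ j → (((w i - w j : ℤ)) : R) ≠ 0 := by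
    intro i j hij
    rw [Int.cast_ne_zero, sub_ne_zero]
    exact fun h => hij (hinj h)
  have e0 : (Finset.univ.erase (0 : Fin 3)) = {1, 2} := by decide
  have e1 : (Finset.univ.erase (1 : Fin 3)) = {0, 2} := by decide
  have e2 : (Finset.univ.erase (2 : Fin 3)) = {0, 1} := by decide
  rw [SH, Fin.sum_univ_three, e0, e1, e2,
    Finset.prod_pair (by decide), Finset.prod_pair (by decide),
    Finset.prod_pair (by decide), FH_eq_shift,
    zscale_shift _ (hne 1 0 (by decide)), zscale_shift _ (hne 2 0 (by decide)),
    zscale_shift _ (hne 0 1 (by decide)), zscale_shift _ (hne 2 1 (by decide)),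
    zscale_shift _ (hne 0 2 (by decide)), zscale_shift _ (hne 1 2 (by decide)),
    shift_one_mul, shift_one_mul, shift_one_mul, shift_add, shift_add]
  rfl

theorem Pm_eq_zero [CharZero R] (H : PowerSeries R) (hrig : AlgRigid H 2) (m : ℕ)
    (hm : m ≠ 2) : Pm H m = (0 : R[X]) := by
  apply Polynomial.eq_zero_of_infinite_isRoot
  apply Set.infinite_of_injective_forall_mem (f := fun n : ℕ => (((n + 2 : ℕ) : ℕ) : R))
  · intro a b hab
    have : ((a + 2 : ℕ) : R) = ((b + 2 : ℕ) : R) := hab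
    have h2 : (a + 2 : ℕ) = (b + 2 : ℕ) := Nat.cast_injective this
    omega
  · intro n
    have hinj : Function.Injective ![0, 1, ((n + 2 : ℕ) : ℤ)] := by
      intro i j hij
      fin_cases i <;> fin_cases j <;> simp_all <;> omega
    have hk : ((m : ℤ) - 2) ≠ 0 := by omega
    have hS := hrig 2 one_le_two le_rfl ![0, 1, ((n + 2 : ℕ) : ℤ)] hinj ((m : ℤ) - 2) hk
    rw [SH3_eq H _ hinj] at hS
    have h2 : ((m : ℤ) - 2) = (m : ℤ) - ((2 : ℕ) : ℤ) := by norm_num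
    rw [h2, shift_coeff_nat] at hS
    have d10 : (![0, 1, ((n + 2 : ℕ) : ℤ)] : Fin 3 → ℤ) 1 - ![0, 1, ((n + 2 : ℕ) : ℤ)] 0 = 1 := by
      simp
    have d20 : (![0, 1, ((n + 2 : ℕ) : ℤ)] : Fin 3 → ℤ) 2 - ![0, 1, ((n + 2 : ℕ) : ℤ)] 0
        = ((n + 2 : ℕ) : ℤ) := by simp
    have d01 : (![0, 1, ((n + 2 : ℕ) : ℤ)] : Fin 3 → ℤ) 0 - ![0, 1, ((n + 2 : ℕ) : ℤ)] 1 = -1 := by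
      simp
    have d21 : (![0, 1, ((n + 2 : ℕ) : ℤ)] : Fin 3 → ℤ) 2 - ![0, 1, ((n + 2 : ℕ) : ℤ)] 1
        = ((n + 2 : ℕ) : ℤ) - 1 := by simp
    have d02 : (![0, 1, ((n + 2 : ℕ) : ℤ)] : Fin 3 → ℤ) 0 - ![0, 1, ((n + 2 : ℕ) : ℤ)] 2
        = -((n + 2 : ℕ) : ℤ) := by simp
    have d12 : (![0, 1, ((n + 2 : ℕ) : ℤ)] : Fin 3 → ℤ) 1 - ![0, 1, ((n + 2 : ℕ) : ℤ)] 2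
        = 1 - ((n + 2 : ℕ) : ℤ) := by simp
    rw [d10, d20, d01, d21, d02, d12] at hS
    have hu0 : ((((n + 2 : ℕ) : ℤ)) : R) ≠ 0 := by
      rw [Int.cast_ne_zero]; omega
    have hu1 : ((((n + 2 : ℕ) : ℤ)) : R) - 1 ≠ 0 := by
      have hc : ((((n + 2 : ℕ) : ℤ)) : R) - 1 = ((((n + 2 : ℕ) : ℤ) - 1 : ℤ) : R) := by
        push_cast; ring
      rw [hc, Int.cast_ne_zero]; omega
    show Polynomial.IsRoot (Pm H m) _
    rw [Polynomial.IsRoot]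
    have hx : ((n + 2 : ℕ) : R) = ((((n + 2 : ℕ) : ℤ)) : R) := by push_cast; ring
    rw [hx, ← coeff_Wx, Wx_eq H ((n + 2 : ℕ) : ℤ) hu0 hu1, PowerSeries.coeff_C_mul, hS, mul_zero]

end AuxRigid2

/-- Lemma 4.1: if `H = 1 + r₁t + ⋯` is 2-algebraically rigid, then
`F_H(−t)² + h₁·F_H(t) + F_H′(t) = h₂`, where `h₁ = [H²]₁` and `h₂ = [H³]₂`. -/
theorem FH_neg_sq_add_of_algRigid_two {R : Type*} [Field R] [CharZero R]
    (H : PowerSeries R) (hH : PowerSeries.constantCoeff H = 1)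
    (hrig : AlgRigid H 2) :
    zscale (-1 : R) (FH H) ^ 2
        + (HahnSeries.C (PowerSeries.coeff 1 (H ^ 2)) : LaurentSeries R) * FH H
        + lderiv (FH H)
      = (HahnSeries.C (PowerSeries.coeff 2 (H ^ 3)) : LaurentSeries R) := by
  classical
  have h0 : PowerSeries.coeff 0 H = 1 := by
    rw [PowerSeries.coeff_zero_eq_constantCoeff]; exact hH
  have hm1 : (-1 : R) ≠ 0 := by norm_num
  rw [FH_eq_shift, zscale_shift (-1 : R) hm1 H, C_mul_shift, lderiv_shift, pow_two,
    shift_one_mul,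
    ← shift_X_two (PowerSeries.C (PowerSeries.coeff 1 (H ^ 2)) * H),
    ← shift_C (PowerSeries.coeff 2 (H ^ 3)), shift_add, shift_add]
  apply congrArg
  ext m
  rw [map_add, map_add]
  have hsq : PowerSeries.coeff m
      ((PowerSeries.C (-1 : R)⁻¹ * PowerSeries.rescale (-1) H) *
        (PowerSeries.C (-1 : R)⁻¹ * PowerSeries.rescale (-1) H))
      = (-1 : R) ^ m * ∑ p ∈ Finset.HasAntidiagonal.antidiagonal m,
          PowerSeries.coeff p.1 H * PowerSeries.coeff p.2 H := by
    have hone : PowerSeries.C (-1 : R)⁻¹ * PowerSeries.C (-1 : R)⁻¹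
        = (1 : PowerSeries R) := by
      rw [← map_mul]
      norm_num
    rw [mul_mul_mul_comm, hone, one_mul, PowerSeries.coeff_mul, Finset.mul_sum]
    refine Finset.sum_congr rfl fun p hp => ?_
    have hm : p.1 + p.2 = m := Finset.HasAntidiagonal.mem_antidiagonal.mp hp
    rw [PowerSeries.coeff_rescale, PowerSeries.coeff_rescale]
    calc (-1 : R) ^ p.1 * PowerSeries.coeff p.1 H *
          ((-1 : R) ^ p.2 * PowerSeries.coeff p.2 H)
        = ((-1 : R) ^ p.1 * (-1 : R) ^ p.2) *
            (PowerSeries.coeff p.1 H * PowerSeries.coeff p.2 H) := by ring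
      _ = _ := by rw [← pow_add, hm]
  have hXmul : PowerSeries.coeff m
      (PowerSeries.X * (PowerSeries.C (PowerSeries.coeff 1 (H ^ 2)) * H))
      = if m = 0 then 0
        else PowerSeries.coeff 1 (H ^ 2) * PowerSeries.coeff (m - 1) H := by
    cases m with
    | zero => simp
    | succ k =>
      rw [PowerSeries.coeff_succ_X_mul, PowerSeries.coeff_C_mul]
      simp
  have hC2 : PowerSeries.coeff m
      (PowerSeries.C (PowerSeries.coeff 2 (H ^ 3)) * PowerSeries.X ^ 2)
      = if m = 2 then PowerSeries.coeff 2 (H ^ 3) else 0 := by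
    rw [PowerSeries.coeff_C_mul, PowerSeries.coeff_X_pow]
    simp
  have hh1 : PowerSeries.coeff 1 (H ^ 2) = 2 * PowerSeries.coeff 1 H := by
    rw [pow_two, PowerSeries.coeff_mul, Finset.Nat.sum_antidiagonal_eq_sum_range_succ_mk]
    simp [Finset.sum_range_succ, h0]
    ring
  rw [hsq, hXmul, PowerSeries.coeff_mk, hC2]
  by_cases hm2 : m = 2
  · subst hm2
    rw [if_pos rfl, if_neg (by norm_num : (2 : ℕ) ≠ 0), hh1]
    have e3 : (H ^ 3 : PowerSeries R) = H * (H * H) := by ring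
    rw [e3]
    simp only [PowerSeries.coeff_mul, Finset.Nat.sum_antidiagonal_eq_sum_range_succ_mk,
      Finset.sum_range_succ, Finset.sum_range_zero]
    norm_num [h0]
    ring
  · rw [if_neg hm2]
    have hstar := star H h0 m (Pm_eq_zero H hrig m hm2)
    rcases eq_or_ne m 0 with rfl | hm0
    · rw [if_pos rfl] at hstar ⊢
      linear_combination hstar
    · rw [if_neg hm0] at hstar ⊢
      rw [hh1]
      have heps : (-1 : R) ^ m * (-1 : R) ^ m = 1 := by
        rw [← mul_pow]; norm_num
      linear_combination ((-1 : R) ^ m) * hstar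
        - (((m : R) - 1) * PowerSeries.coeff m H
            + 2 * PowerSeries.coeff 1 H * PowerSeries.coeff (m - 1) H) * heps

end RigidGenus
end
end

section
/- Let H(t) = 1 + r_1 t + r_2 t² + ⋯ ∈ ℂ[[t]] be 2-algebraically rigid and set d = h_2 − 3r_1², where h_2 = [H³]_2. If d ≠ 0, then H = D_{s,r_1} for any square root s ∈ ℂ of d. If d = 0, then H(t) = 1 + r_1 t = D_{0,r_1}(t). -/
noncomputable section

namespace RigidGenus

variable {R : Type*} [Field R]

section Aux
open PowerSeries

section CLemmas

open PowerSeries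

local notation "ofP" => HahnSeries.ofPowerSeries ℤ ℂ

lemma zscale_coeff (w : ℂ) (f : LaurentSeries ℂ) (k : ℤ) :
    (zscale w f).coeff k = w ^ k * f.coeff k := rfl

lemma single_mul_coeff (c : ℂ) (x : LaurentSeries ℂ) (b k : ℤ) :
    (HahnSeries.single b c * x).coeff k = c * x.coeff (k - b) := by
  have := HahnSeries.coeff_single_mul_add (r := c) (x := x) (a := k - b) (b := b)
  rwa [sub_add_cancel] at this

lemma ofP_coeff_neg (A : PowerSeries ℂ) (k : ℤ) (hk : k < 0) :
    (ofP A).coeff k = 0 := by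
  rw [HahnSeries.ofPowerSeries_apply]
  apply HahnSeries.embDomain_notin_range
  rintro ⟨n, hn⟩
  replace hn : (n:ℤ) = k := hn
  omega

lemma zscale_FH_s6 (H : PowerSeries ℂ) (a : ℂ) (ha : a ≠ 0) :
    zscale a (FH H) = HahnSeries.single (-1 : ℤ) a⁻¹ * ofP (rescale a H) := by
  ext k
  rw [zscale_coeff, FH, single_mul_coeff, single_mul_coeff]
  rw [show k - (-1 : ℤ) = k + 1 by ring]
  rcases lt_or_ge (k + 1) 0 with h | h
  · rw [ofP_coeff_neg _ _ h, ofP_coeff_neg _ _ h]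
    ring
  · rw [show (k + 1 : ℤ) = ((k+1).toNat : ℤ) by omega]
    rw [HahnSeries.ofPowerSeries_apply_coeff, HahnSeries.ofPowerSeries_apply_coeff,
      coeff_rescale]
    have hk : k = ((k+1).toNat : ℤ) - 1 := by omega
    rw [hk, zpow_sub₀ ha, zpow_natCast, zpow_one]
    field_simp
    simp only [sub_add_cancel, Int.toNat_natCast]; ring

lemma single_ofP_mul (c c' : ℂ) (A B : PowerSeries ℂ) :
    (HahnSeries.single (-1:ℤ) c * ofP A) * (HahnSeries.single (-1:ℤ) c' * ofP B)
      = HahnSeries.single (-2:ℤ) (c*c') * ofP (A*B) := by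
  rw [mul_mul_mul_comm, HahnSeries.single_mul_single, ← map_mul]
  norm_num

lemma coeff_single2_ofP (c : ℂ) (Q : PowerSeries ℂ) (n : ℕ) :
    (HahnSeries.single (-2:ℤ) c * ofP Q).coeff ((n:ℤ) - 2) = c * PowerSeries.coeff n Q := by
  rw [single_mul_coeff, show ((n:ℤ) - 2 - (-2)) = (n:ℤ) by ring,
    HahnSeries.ofPowerSeries_apply_coeff]

lemma coeff_single1_ofP (c : ℂ) (Q : PowerSeries ℂ) (n : ℕ) :
    (HahnSeries.single (-1:ℤ) c * ofP Q).coeff ((n:ℤ) - 1) = c * PowerSeries.coeff n Q := by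
  rw [single_mul_coeff, show ((n:ℤ) - 1 - (-1)) = (n:ℤ) by ring,
    HahnSeries.ofPowerSeries_apply_coeff]

/-- rigidity at level 1 gives: `rescale (-1) H = H - 2 r₁ X`. -/
lemma level_one (H : PowerSeries ℂ) (hrig : AlgRigid H 2) (r₁ : ℂ)
    (hr₁ : PowerSeries.coeff 1 H = r₁) :
    rescale (-1 : ℂ) H = H - PowerSeries.C (2 * r₁) * PowerSeries.X := by
  have h1 := hrig 1 le_rfl one_le_two ![0, 1] (by decide)
  have hSH : SH H ![0, 1] = HahnSeries.single (-1:ℤ) 1 * ofP (rescale (1:ℂ) H)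
      + HahnSeries.single (-1:ℤ) (-1 : ℂ)⁻¹ * ofP (rescale (-1:ℂ) H) := by
    rw [SH, Fin.sum_univ_two,
      show (Finset.univ.erase (0 : Fin 2)) = {1} by decide,
      show (Finset.univ.erase (1 : Fin 2)) = {0} by decide,
      Finset.prod_singleton, Finset.prod_singleton,
      show ((![(0:ℤ),1] 1 - ![(0:ℤ),1] 0 : ℤ) : ℂ) = 1 by norm_num,
      show ((![(0:ℤ),1] 0 - ![(0:ℤ),1] 1 : ℤ) : ℂ) = -1 by norm_num,
      zscale_FH_s6 H 1 one_ne_zero, zscale_FH_s6 H (-1) (by norm_num), inv_one]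
  have key : ∀ n : ℕ, n ≠ 1 → PowerSeries.coeff n (rescale (-1:ℂ) H)
      = PowerSeries.coeff n H := by
    intro n hn
    have hk := h1 ((n:ℤ) - 1) (by omega)
    rw [hSH, HahnSeries.coeff_add, coeff_single1_ofP, coeff_single1_ofP,
      rescale_one] at hk
    rw [show ((-1:ℂ))⁻¹ = -1 by norm_num] at hk
    simp only [RingHom.id_apply, one_mul, neg_mul] at hk
    linear_combination -hk
  ext n
  rcases eq_or_ne n 1 with rfl | hn
  · rw [coeff_rescale, hr₁, map_sub, hr₁, PowerSeries.coeff_C_mul, PowerSeries.coeff_X]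
    norm_num
    ring
  · rw [key n hn, map_sub, PowerSeries.coeff_C_mul, PowerSeries.coeff_X, if_neg hn]
    ring

/-- rigidity at level 2: the duplication relation, coefficientwise. -/
lemma level_two (H : PowerSeries ℂ) (hrig : AlgRigid H 2) :
    ∀ n : ℕ, n ≠ 2 →
      PowerSeries.coeff n (H * rescale (2:ℂ) H)
        - 2 * PowerSeries.coeff n (rescale (-1:ℂ) H * H)
        + PowerSeries.coeff n (rescale (-2:ℂ) H * rescale (-1:ℂ) H) = 0 := by
  have h2 := hrig 2 one_le_two le_rfl ![0, 1, 2] (by decide)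
  have hSH : SH H ![0, 1, 2] =
      HahnSeries.single (-2:ℤ) ((2:ℂ)⁻¹) * ofP (H * rescale (2:ℂ) H)
      + HahnSeries.single (-2:ℤ) ((-1:ℂ)) * ofP (rescale (-1:ℂ) H * H)
      + HahnSeries.single (-2:ℤ) ((2:ℂ)⁻¹) * ofP (rescale (-2:ℂ) H * rescale (-1:ℂ) H) := by
    rw [SH, Fin.sum_univ_three,
      show (Finset.univ.erase (0 : Fin 3)) = {1, 2} by decide,
      show (Finset.univ.erase (1 : Fin 3)) = {0, 2} by decide,
      show (Finset.univ.erase (2 : Fin 3)) = {0, 1} by decide,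
      Finset.prod_insert (by decide : (1 : Fin 3) ∉ ({2} : Finset (Fin 3))),
      Finset.prod_insert (by decide : (0 : Fin 3) ∉ ({2} : Finset (Fin 3))),
      Finset.prod_insert (by decide : (0 : Fin 3) ∉ ({1} : Finset (Fin 3))),
      Finset.prod_singleton, Finset.prod_singleton, Finset.prod_singleton,
      show ((![(0:ℤ),1,2] 1 - ![(0:ℤ),1,2] 0 : ℤ) : ℂ) = 1 by norm_num,
      show ((![(0:ℤ),1,2] 2 - ![(0:ℤ),1,2] 0 : ℤ) : ℂ) = 2 by norm_num [Matrix.cons_val_two],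
      show ((![(0:ℤ),1,2] 0 - ![(0:ℤ),1,2] 1 : ℤ) : ℂ) = -1 by norm_num,
      show ((![(0:ℤ),1,2] 2 - ![(0:ℤ),1,2] 1 : ℤ) : ℂ) = 1 by norm_num [Matrix.cons_val_two],
      show ((![(0:ℤ),1,2] 0 - ![(0:ℤ),1,2] 2 : ℤ) : ℂ) = -2 by norm_num [Matrix.cons_val_two],
      show ((![(0:ℤ),1,2] 1 - ![(0:ℤ),1,2] 2 : ℤ) : ℂ) = -1 by norm_num [Matrix.cons_val_two],
      zscale_FH_s6 H 1 one_ne_zero, zscale_FH_s6 H 2 two_ne_zero,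
      zscale_FH_s6 H (-1) (by norm_num), zscale_FH_s6 H (-2) (by norm_num),
      single_ofP_mul, single_ofP_mul, single_ofP_mul, inv_one, rescale_one]
    norm_num
  intro n hn
  have hk := h2 ((n:ℤ) - 2) (by omega)
  rw [hSH, HahnSeries.coeff_add, HahnSeries.coeff_add,
    coeff_single2_ofP, coeff_single2_ofP, coeff_single2_ofP] at hk
  field_simp at hk
  linear_combination hk

end CLemmas

section ExpLemmas

lemma expS_eqC (a : ℂ) : expS a = rescale a (PowerSeries.exp ℂ) := by
  ext n
  simp [expS, coeff_rescale, PowerSeries.coeff_exp, PowerSeries.coeff_mk, div_eq_mul_inv]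

lemma expS_addC (a b : ℂ) : expS (a + b) = expS a * expS b := by
  rw [expS_eqC, expS_eqC, expS_eqC, PowerSeries.exp_mul_exp_eq_exp_add]

lemma rescale_expSC (c a : ℂ) : rescale c (expS a) = expS (a * c) := by
  rw [expS_eqC, expS_eqC, rescale_rescale]

lemma coeff_zero_expSC (a : ℂ) : constantCoeff (expS a) = 1 := by
  rw [← coeff_zero_eq_constantCoeff]
  simp [expS, PowerSeries.coeff_mk]

lemma coeff_one_expSC (a : ℂ) : PowerSeries.coeff 1 (expS a) = a := by
  simp [expS, PowerSeries.coeff_mk]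

lemma rescale_CC (c a : ℂ) : rescale c (PowerSeries.C a) = PowerSeries.C a := by
  ext n
  simp only [coeff_rescale, PowerSeries.coeff_C]
  split_ifs with h
  · rw [h]; ring
  · ring

end ExpLemmas

section Uniq

/-- uniqueness for the duplication functional equation -/
lemma dup_uniq (u : ℂ) (G₁ G₂ : PowerSeries ℂ)
    (h0 : constantCoeff G₁ = 1) (h0' : constantCoeff G₂ = 1)
    (h1 : G₁ * (rescale 2 G₁ - G₁) = PowerSeries.C u * PowerSeries.X ^ 2)
    (h2 : G₂ * (rescale 2 G₂ - G₂) = PowerSeries.C u * PowerSeries.X ^ 2) :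
    G₁ = G₂ := by
  ext n
  induction n using Nat.strong_induction_on with
  | _ n ih =>
  match n, ih with
  | 0, _ => rw [coeff_zero_eq_constantCoeff, h0, h0']
  | (m+1), ih =>
    set n := m + 1 with hn
    have key : ∀ G : PowerSeries ℂ,
        PowerSeries.coeff n (G * (rescale 2 G - G)) =
          ∑ p ∈ Finset.HasAntidiagonal.antidiagonal n,
            PowerSeries.coeff p.1 G * (((2:ℂ) ^ p.2 - 1) * PowerSeries.coeff p.2 G) := by
      intro G
      rw [PowerSeries.coeff_mul]
      refine Finset.sum_congr rfl fun p _ => ?_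
      rw [map_sub, coeff_rescale]
      ring
    have c1 : ∑ p ∈ Finset.HasAntidiagonal.antidiagonal n,
        PowerSeries.coeff p.1 G₁ * (((2:ℂ) ^ p.2 - 1) * PowerSeries.coeff p.2 G₁) =
        ∑ p ∈ Finset.HasAntidiagonal.antidiagonal n,
        PowerSeries.coeff p.1 G₂ * (((2:ℂ) ^ p.2 - 1) * PowerSeries.coeff p.2 G₂) := by
      rw [← key, ← key, h1, h2]
    have hmem : ((0:ℕ), n) ∈ Finset.HasAntidiagonal.antidiagonal n := by simp
    rw [← Finset.add_sum_erase _ _ hmem, ← Finset.add_sum_erase _ _ hmem] at c1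
    have hrest : ∀ p ∈ (Finset.HasAntidiagonal.antidiagonal n).erase (0, n),
        PowerSeries.coeff p.1 G₁ * (((2:ℂ) ^ p.2 - 1) * PowerSeries.coeff p.2 G₁) =
        PowerSeries.coeff p.1 G₂ * (((2:ℂ) ^ p.2 - 1) * PowerSeries.coeff p.2 G₂) := by
      intro p hp
      rcases Finset.mem_erase.mp hp with ⟨hne, hpd⟩
      have hsum := Finset.HasAntidiagonal.mem_antidiagonal.mp hpd
      by_cases hz : p.2 = n
      · have hp1 : p.1 = 0 := by omega
        exact absurd (Prod.ext hp1 hz) hne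
      · have hlt : p.2 < n := by omega
        rw [ih p.2 hlt]
        by_cases h1z : p.1 = n
        · have hp2 : p.2 = 0 := by omega
          rw [hp2]; norm_num
        · rw [ih p.1 (by omega)]
    rw [Finset.sum_congr rfl hrest] at c1
    have c2 := add_right_cancel c1
    simp only [coeff_zero_eq_constantCoeff, h0, h0', one_mul] at c2
    have h2n : ((2:ℂ) ^ n - 1) ≠ 0 := by
      refine sub_ne_zero.mpr ?_
      exact_mod_cast (Nat.one_lt_two_pow_iff.mpr (by omega : n ≠ 0)).ne'
    exact mul_left_cancel₀ h2n c2

end Uniq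

section GcSection

def Sh (s : ℂ) : PowerSeries ℂ := expS s - expS (-s)
def Ch (s : ℂ) : PowerSeries ℂ := expS s + expS (-s)
def Vs (s : ℂ) : PowerSeries ℂ := PowerSeries.mk fun n => PowerSeries.coeff (n+1) (Sh s)

lemma X_mul_Vs (s : ℂ) : PowerSeries.X * Vs s = Sh s := by
  ext n
  cases n with
  | zero =>
    simp [PowerSeries.coeff_zero_eq_constantCoeff, Sh, map_sub, coeff_zero_expSC]
  | succ n =>
    rw [PowerSeries.coeff_succ_X_mul, Vs, PowerSeries.coeff_mk]

lemma constantCoeff_Vs (s : ℂ) : constantCoeff (Vs s) = 2 * s := by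
  have h : constantCoeff (Vs s) = PowerSeries.coeff 1 (Sh s) := by
    rw [← coeff_zero_eq_constantCoeff, Vs, PowerSeries.coeff_mk]
  rw [h, Sh, map_sub, coeff_one_expSC, coeff_one_expSC]
  ring

def Gc (s : ℂ) : PowerSeries ℂ := PowerSeries.C s * Ch s * (Vs s)⁻¹

lemma Vs_inv_mul (s : ℂ) (hs : s ≠ 0) : (Vs s)⁻¹ * Vs s = 1 :=
  PowerSeries.inv_mul_cancel _ (by rw [constantCoeff_Vs]; simpa using hs)

lemma Gc_mul_Sh (s : ℂ) (hs : s ≠ 0) :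
    Gc s * Sh s = PowerSeries.C s * PowerSeries.X * Ch s := by
  rw [← X_mul_Vs, Gc]
  calc PowerSeries.C s * Ch s * (Vs s)⁻¹ * (PowerSeries.X * Vs s)
      = PowerSeries.C s * PowerSeries.X * Ch s * ((Vs s)⁻¹ * Vs s) := by ring
    _ = PowerSeries.C s * PowerSeries.X * Ch s := by rw [Vs_inv_mul s hs, mul_one]

lemma constantCoeff_Gc (s : ℂ) (hs : s ≠ 0) : constantCoeff (Gc s) = 1 := by
  rw [Gc, map_mul, map_mul, PowerSeries.constantCoeff_C, PowerSeries.constantCoeff_inv,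
    constantCoeff_Vs, Ch, map_add, coeff_zero_expSC, coeff_zero_expSC]
  field_simp
  ring

lemma rescale2_Sh (s : ℂ) :
    rescale 2 (Sh s) = expS s * expS s - expS (-s) * expS (-s) := by
  rw [Sh, map_sub, rescale_expSC, rescale_expSC, show s * 2 = s + s by ring,
    show -s * 2 = -s + -s by ring, expS_addC, expS_addC]

lemma rescale2_Ch (s : ℂ) :
    rescale 2 (Ch s) = expS s * expS s + expS (-s) * expS (-s) := by
  rw [Ch, map_add, rescale_expSC, rescale_expSC, show s * 2 = s + s by ring,
    show -s * 2 = -s + -s by ring, expS_addC, expS_addC]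

lemma key_identity (s : ℂ) :
    Ch s * (2 * rescale 2 (Ch s) * Sh s - Ch s * rescale 2 (Sh s)) =
      Sh s * Sh s * rescale 2 (Sh s) := by
  rw [rescale2_Sh, rescale2_Ch, Sh, Ch]
  ring

lemma Sh_ne_zero (s : ℂ) (hs : s ≠ 0) : Sh s ≠ 0 := by
  intro h
  have h1 : PowerSeries.coeff 1 (Sh s) = 0 := by rw [h, map_zero]
  rw [Sh, map_sub, coeff_one_expSC, coeff_one_expSC] at h1
  apply hs
  linear_combination h1 / 2

lemma rescale2_Sh_ne_zero (s : ℂ) (hs : s ≠ 0) : rescale 2 (Sh s) ≠ 0 := by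
  intro h
  have h1 : PowerSeries.coeff 1 (rescale 2 (Sh s)) = 0 := by rw [h, map_zero]
  rw [coeff_rescale, Sh, map_sub, coeff_one_expSC, coeff_one_expSC] at h1
  apply hs
  linear_combination h1 / 4

lemma Gc_eqn (s : ℂ) (hs : s ≠ 0) :
    Gc s * (rescale 2 (Gc s) - Gc s) = PowerSeries.C (s ^ 2) * PowerSeries.X ^ 2 := by
  have hcan : Sh s * Sh s * rescale 2 (Sh s) ≠ 0 :=
    mul_ne_zero (mul_ne_zero (Sh_ne_zero s hs) (Sh_ne_zero s hs)) (rescale2_Sh_ne_zero s hs)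
  apply mul_right_cancel₀ hcan
  have h2 : rescale 2 (Gc s) * rescale 2 (Sh s) =
      PowerSeries.C s * (PowerSeries.C 2 * PowerSeries.X) * rescale 2 (Ch s) := by
    rw [← map_mul, Gc_mul_Sh s hs, map_mul, map_mul, rescale_X, rescale_CC]
  calc Gc s * (rescale 2 (Gc s) - Gc s) * (Sh s * Sh s * rescale 2 (Sh s))
      = (Gc s * Sh s) * ((rescale 2 (Gc s) * rescale 2 (Sh s)) * Sh s)
        - (Gc s * Sh s) * ((Gc s * Sh s) * rescale 2 (Sh s)) := by ring
    _ = (PowerSeries.C s * PowerSeries.X * Ch s) *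
          ((PowerSeries.C s * (PowerSeries.C 2 * PowerSeries.X) * rescale 2 (Ch s)) * Sh s)
        - (PowerSeries.C s * PowerSeries.X * Ch s) *
          ((PowerSeries.C s * PowerSeries.X * Ch s) * rescale 2 (Sh s)) := by
        rw [Gc_mul_Sh s hs, h2]
    _ = (PowerSeries.C s * PowerSeries.C s) * PowerSeries.X ^ 2 *
          (Ch s * (2 * rescale 2 (Ch s) * Sh s - Ch s * rescale 2 (Sh s))) := by
        rw [show PowerSeries.C (2:ℂ) = (2 : PowerSeries ℂ) from map_ofNat _ 2]
        ring
    _ = PowerSeries.C (s ^ 2) * PowerSeries.X ^ 2 * (Sh s * Sh s * rescale 2 (Sh s)) := by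
        rw [key_identity, ← map_mul, ← pow_two]

end GcSection

section CoeffHelpers

lemma coeff_mul_zeroC (A B : PowerSeries ℂ) :
    PowerSeries.coeff 0 (A * B) = PowerSeries.coeff 0 A * PowerSeries.coeff 0 B := by
  rw [PowerSeries.coeff_mul, show Finset.HasAntidiagonal.antidiagonal (0:ℕ) = {(0,0)} by decide,
    Finset.sum_singleton]

lemma coeff_mul_oneC (A B : PowerSeries ℂ) :
    PowerSeries.coeff 1 (A * B) = PowerSeries.coeff 0 A * PowerSeries.coeff 1 B
      + PowerSeries.coeff 1 A * PowerSeries.coeff 0 B := by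
  rw [PowerSeries.coeff_mul, show Finset.HasAntidiagonal.antidiagonal (1:ℕ) = {(0,1),(1,0)} by decide,
    Finset.sum_insert (by decide), Finset.sum_singleton]

lemma coeff_mul_twoC (A B : PowerSeries ℂ) :
    PowerSeries.coeff 2 (A * B) = PowerSeries.coeff 0 A * PowerSeries.coeff 2 B
      + PowerSeries.coeff 1 A * PowerSeries.coeff 1 B
      + PowerSeries.coeff 2 A * PowerSeries.coeff 0 B := by
  rw [PowerSeries.coeff_mul, show Finset.HasAntidiagonal.antidiagonal (2:ℕ) = {(0,2),(1,1),(2,0)} by decide,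
    Finset.sum_insert (by decide), Finset.sum_insert (by decide), Finset.sum_singleton]
  ring

end CoeffHelpers

end Aux

/-- let `H = 1 + r₁t + ⋯ ∈ ℂ[[t]]` be 2-algebraically rigid and `d = h₂ − 3r₁²`
with `h₂ = [H³]₂`. If `d ≠ 0` then `H = D_{s,r₁}` for any square root `s` of `d`;
if `d = 0` then `H = 1 + r₁t = D_{0,r₁}`. -/
theorem algRigid_two_eq_Dab (H : PowerSeries ℂ) (hH : PowerSeries.constantCoeff H = 1)
    (hrig : AlgRigid H 2) (r₁ d : ℂ)
    (hr₁ : PowerSeries.coeff 1 H = r₁)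
    (hd : d = PowerSeries.coeff 2 (H ^ 3) - 3 * r₁ ^ 2) :
    (d ≠ 0 → ∀ s : ℂ, s ^ 2 = d → IsDab s r₁ H) ∧
    (d = 0 → H = 1 + PowerSeries.C r₁ * PowerSeries.X) := by
  classical
  open PowerSeries in
  obtain ⟨r₂, hr₂⟩ : ∃ r₂, r₂ = PowerSeries.coeff 2 H := ⟨_, rfl⟩
  obtain ⟨G, hGdef⟩ : ∃ G, G = H - PowerSeries.C r₁ * PowerSeries.X := ⟨_, rfl⟩
  have hHG : H = G + PowerSeries.C r₁ * PowerSeries.X := by rw [hGdef]; ring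
  have hG0 : PowerSeries.constantCoeff G = 1 := by
    rw [hGdef, map_sub, hH, map_mul, PowerSeries.constantCoeff_X, mul_zero, sub_zero]
  have hG1 : PowerSeries.coeff 1 G = 0 := by
    rw [hGdef, map_sub, hr₁, PowerSeries.coeff_C_mul, PowerSeries.coeff_X, if_pos rfl]
    ring
  have hG2 : PowerSeries.coeff 2 G = r₂ := by
    rw [hGdef, map_sub, PowerSeries.coeff_C_mul, PowerSeries.coeff_X, if_neg (by norm_num)]
    rw [← hr₂]; ring
  have hCr2 : PowerSeries.C (2 * r₁) = 2 * PowerSeries.C r₁ := by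
    rw [map_mul, map_ofNat]
  have hRm1 : PowerSeries.rescale (-1:ℂ) H = G - PowerSeries.C r₁ * PowerSeries.X := by
    rw [level_one H hrig r₁ hr₁, hCr2, hHG]; ring
  have hresX : PowerSeries.rescale (2:ℂ) (PowerSeries.C r₁ * PowerSeries.X)
      = 2 * (PowerSeries.C r₁ * PowerSeries.X) := by
    rw [map_mul, PowerSeries.rescale_X, rescale_CC,
      show PowerSeries.C (2:ℂ) = (2 : PowerSeries ℂ) from map_ofNat _ 2]
    ring
  have hR2 : PowerSeries.rescale (2:ℂ) H
      = PowerSeries.rescale 2 G + 2 * (PowerSeries.C r₁ * PowerSeries.X) := by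
    rw [hHG, map_add, hresX]
  have hRm2 : PowerSeries.rescale (-2:ℂ) H
      = PowerSeries.rescale 2 G - 2 * (PowerSeries.C r₁ * PowerSeries.X) := by
    rw [show (-2:ℂ) = -1 * 2 by norm_num, ← PowerSeries.rescale_rescale, hRm1,
      map_sub, hresX]
  -- the duplication functional equation for G
  have hfe0 : ∀ n : ℕ, n ≠ 2 →
      PowerSeries.coeff n (G * (PowerSeries.rescale 2 G - G)) = 0 := by
    intro n hn
    have hlt := level_two H hrig n hn
    have hX2 : PowerSeries.coeff n
        ((PowerSeries.C r₁ * PowerSeries.X) * (PowerSeries.C r₁ * PowerSeries.X)) = 0 := by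
      rw [show (PowerSeries.C r₁ * PowerSeries.X) * (PowerSeries.C r₁ * PowerSeries.X)
          = PowerSeries.C (r₁ ^ 2) * PowerSeries.X ^ 2 by rw [map_pow]; ring,
        PowerSeries.coeff_C_mul, PowerSeries.coeff_X_pow, if_neg hn, mul_zero]
    have hexp : H * PowerSeries.rescale (2:ℂ) H
        - PowerSeries.C 2 * (PowerSeries.rescale (-1:ℂ) H * H)
        + PowerSeries.rescale (-2:ℂ) H * PowerSeries.rescale (-1:ℂ) H
        = PowerSeries.C 2 * (G * (PowerSeries.rescale 2 G - G))
          + PowerSeries.C 6 *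
            ((PowerSeries.C r₁ * PowerSeries.X) * (PowerSeries.C r₁ * PowerSeries.X)) := by
      rw [show PowerSeries.C (2:ℂ) = (2 : PowerSeries ℂ) from map_ofNat _ 2,
        show PowerSeries.C (6:ℂ) = (6 : PowerSeries ℂ) from map_ofNat _ 6]
      rw [hR2, hRm1, hRm2, hHG]
      ring
    have hco := congrArg (PowerSeries.coeff n) hexp
    rw [map_add, map_sub, map_add, PowerSeries.coeff_C_mul, PowerSeries.coeff_C_mul,
      PowerSeries.coeff_C_mul, hX2] at hco
    linear_combination (hlt - hco) / 2
  obtain ⟨u, hu_def⟩ : ∃ u, u = PowerSeries.coeff 2 (G * (PowerSeries.rescale 2 G - G)) :=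
    ⟨_, rfl⟩
  have hfeG : G * (PowerSeries.rescale 2 G - G)
      = PowerSeries.C u * PowerSeries.X ^ 2 := by
    ext n
    rcases eq_or_ne n 2 with rfl | hn
    · rw [PowerSeries.coeff_C_mul, PowerSeries.coeff_X_pow, if_pos rfl, mul_one]
      exact hu_def.symm
    · rw [hfe0 n hn, PowerSeries.coeff_C_mul, PowerSeries.coeff_X_pow, if_neg hn, mul_zero]
  have hu : u = 3 * r₂ := by
    rw [hu_def, coeff_mul_twoC]
    rw [map_sub, map_sub, map_sub, PowerSeries.coeff_rescale, PowerSeries.coeff_rescale,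
      PowerSeries.coeff_rescale, PowerSeries.coeff_zero_eq_constantCoeff_apply, hG0, hG1, hG2]
    norm_num
    ring
  -- compute d = 3 r₂
  have hcube : PowerSeries.coeff 2 (H ^ 3) = 3 * r₂ + 3 * r₁ ^ 2 := by
    rw [show H ^ 3 = H * (H * H) by ring, coeff_mul_twoC, coeff_mul_twoC, coeff_mul_oneC,
      coeff_mul_zeroC, PowerSeries.coeff_zero_eq_constantCoeff_apply, hH, hr₁, ← hr₂]
    ring
  have hd3 : d = 3 * r₂ := by rw [hd, hcube]; ring
  constructor
  · intro hdne s hs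
    have hs0 : s ≠ 0 := by
      intro h
      apply hdne
      rw [← hs, h]
      ring
    have hus : u = s ^ 2 := by rw [hu, ← hd3, ← hs]
    have hGeq : G = Gc s := by
      refine dup_uniq (s ^ 2) G (Gc s) hG0 (constantCoeff_Gc s hs0) ?_ (Gc_eqn s hs0)
      rw [hfeG, hus]
    left
    refine ⟨hs0, ?_⟩
    have hGSh := Gc_mul_Sh s hs0
    rw [← hGeq] at hGSh
    simp only [Sh, Ch] at hGSh
    rw [hHG]
    linear_combination hGSh
  · intro hd0
    have hu0 : u = 0 := by rw [hu, ← hd3, hd0]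
    have hzero : G * (PowerSeries.rescale 2 G - G) = 0 := by
      rw [hfeG, hu0, map_zero, zero_mul]
    have hGne : G ≠ 0 := by
      intro h
      rw [h, map_zero] at hG0
      exact one_ne_zero hG0.symm
    have hsub : PowerSeries.rescale 2 G - G = 0 := by
      rcases mul_eq_zero.mp hzero with h | h
      · exact absurd h hGne
      · exact h
    have hres : PowerSeries.rescale 2 G = G := sub_eq_zero.mp hsub
    have hG1' : G = 1 := by
      ext n
      cases n with
      | zero =>
        rw [PowerSeries.coeff_one, if_pos rfl, PowerSeries.coeff_zero_eq_constantCoeff_apply, hG0]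
      | succ m =>
        have hc := congrArg (PowerSeries.coeff (m+1)) hres
        rw [PowerSeries.coeff_rescale] at hc
        have h2n : ((2:ℂ) ^ (m+1) - 1) ≠ 0 := by
          refine sub_ne_zero.mpr ?_
          exact_mod_cast (Nat.one_lt_two_pow_iff.mpr (by omega : m + 1 ≠ 0)).ne'
        have : PowerSeries.coeff (m+1) G = 0 := by
          have h3 : ((2:ℂ) ^ (m+1) - 1) * PowerSeries.coeff (m+1) G = 0 := by
            linear_combination hc
          exact (mul_eq_zero.mp h3).resolve_left h2n
        rw [this, PowerSeries.coeff_one, if_neg (by omega)]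
    rw [hHG, hG1']

end RigidGenus
end
end

section
/- For a, b ∈ ℂ with a ≠ 0 and every n ≥ 0, the coefficient of t^n in D_{a,b}(t)^{n+1} equals ((b + a)^{n+1} − (b − a)^{n+1})/(2a) = Σ_{k=0}^{n} (b + a)^k (b − a)^{n−k}. -/
noncomputable section

namespace RigidGenus

variable {R : Type*} [Field R]

section Aux

open PowerSeries

private lemma coeff_expS (x : ℂ) (n : ℕ) :
    coeff n (expS x) = x ^ n / n.factorial := by
  simp [expS]

private lemma expS_eq_rescale (x : ℂ) : expS x = rescale x (exp ℂ) := by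
  ext n
  rw [coeff_expS, coeff_rescale, coeff_exp, map_div₀, map_one, map_natCast]
  ring

private lemma expS_mul (x y : ℂ) : expS x * expS y = expS (x + y) := by
  rw [expS_eq_rescale, expS_eq_rescale, expS_eq_rescale, exp_mul_exp_eq_exp_add]

private lemma constantCoeff_expS (x : ℂ) : constantCoeff (expS x) = 1 := by
  rw [← coeff_zero_eq_constantCoeff_apply, coeff_expS]
  simp

private lemma expS_zero : expS (0 : ℂ) = 1 := by
  ext n
  cases n with
  | zero => simp [coeff_expS]
  | succ k => simp [coeff_expS]

/-- The key "formal residue" computation: if `s` is a power series with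
`s(0) = 2a ≠ 0` satisfying `X s' = 2a - s - 2a X s`, then the coefficient of
`X^m` in `s⁻¹ ^ (m+1)` is `1/(2a)` for every `m`. -/
private lemma key_coeff (a : ℂ) (s : ℂ⟦X⟧) (h2a : 2 * a ≠ 0)
    (hs0 : constantCoeff s = 2 * a)
    (hstar : X * (d⁄dX ℂ s) = C (2 * a) - s - C (2 * a) * (X * s)) :
    ∀ m : ℕ, (2 * a) * coeff m ((s⁻¹) ^ (m + 1)) = 1 := by
  have hs0' : constantCoeff s ≠ 0 := by rw [hs0]; exact h2a
  have hsv : s * s⁻¹ = 1 := PowerSeries.mul_inv_cancel s hs0'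
  have hdv : d⁄dX ℂ s⁻¹ = -s⁻¹ ^ 2 * d⁄dX ℂ s := derivative_inv' s
  intro m
  induction m with
  | zero =>
    rw [zero_add, pow_one, coeff_zero_eq_constantCoeff_apply, constantCoeff_inv, hs0]
    exact mul_inv_cancel₀ h2a
  | succ m ih =>
    have hm1 : ((m : ℂ) + 1) ≠ 0 := by
      have h := Nat.cast_ne_zero (R := ℂ).mpr (Nat.succ_ne_zero m)
      push_cast at h
      exact h
    have hsv3 : s * s⁻¹ ^ (m + 1 + 1) = s⁻¹ ^ (m + 1) := by
      calc s * s⁻¹ ^ (m + 1 + 1) = (s * s⁻¹) * s⁻¹ ^ (m + 1) := by ring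
      _ = s⁻¹ ^ (m + 1) := by rw [hsv, one_mul]
    have hexp2 : m + 1 - 1 = m := by omega
    have hDw : X * (d⁄dX ℂ (s⁻¹ ^ (m + 1))) =
        -(((m + 1 : ℕ) : ℂ⟦X⟧) * (C (2 * a) * s⁻¹ ^ (m + 1 + 1) - s⁻¹ ^ (m + 1)
          - C (2 * a) * (X * s⁻¹ ^ (m + 1)))) := by
      rw [Derivation.leibniz_pow, hexp2, hdv, smul_eq_mul, nsmul_eq_mul]
      linear_combination (-(((m + 1 : ℕ) : ℂ⟦X⟧)) * s⁻¹ ^ (m + 1 + 1)) * hstar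
        + (((m + 1 : ℕ) : ℂ⟦X⟧) * (1 + C (2 * a) * X)) * hsv3
    rw [← map_natCast (C (R := ℂ)) (m + 1)] at hDw
    have hc := congrArg (coeff (m + 1)) hDw
    simp only [coeff_succ_X_mul, coeff_derivative, map_neg, coeff_C_mul, map_sub] at hc
    push_cast at hc
    have hc2 : ((m : ℂ) + 1) * ((2 * a) * coeff (m + 1) (s⁻¹ ^ (m + 1 + 1)))
        = ((m : ℂ) + 1) * ((2 * a) * coeff m (s⁻¹ ^ (m + 1))) := by
      linear_combination hc
    have hc3 := mul_left_cancel₀ hm1 hc2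
    linear_combination hc3 + ih

/-- The main computation for the defining relation of `D_{a,b}` with `a ≠ 0`. -/
private lemma main_aux (a b : ℂ) (ha : a ≠ 0) (D : ℂ⟦X⟧)
    (hrel : D * (expS a - expS (-a)) =
      X * (C a * (expS a + expS (-a)) + C b * (expS a - expS (-a))))
    (n : ℕ) :
    coeff n (D ^ (n + 1)) = ((b + a) ^ (n + 1) - (b - a) ^ (n + 1)) / (2 * a) := by
  have h2a : (2 : ℂ) * a ≠ 0 := mul_ne_zero two_ne_zero ha
  set q : ℂ⟦X⟧ := expS (-(2 * a)) with hq
  have h1 : expS a * expS (-a) = 1 := by rw [expS_mul, add_neg_cancel, expS_zero]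
  have h2 : expS (-a) * expS (-a) = q := by rw [expS_mul, hq]; congr 1; ring
  have hDs : D * (1 - q) = X * (C (b + a) - C (b - a) * q) := by
    have hc1 : C (b + a) = C b + C a := map_add _ _ _
    have hc2 : C (b - a) = C b - C a := map_sub _ _ _
    rw [hc1, hc2]
    linear_combination expS (-a) * hrel
      + (-D + X * C a + X * C b) * h1
      + (D + X * C a - X * C b) * h2
  -- the series s with X * s = 1 - q
  set s : ℂ⟦X⟧ := PowerSeries.mk (fun j => - (coeff (j + 1) q)) with hsdef
  have hXs : X * s = 1 - q := by
    ext j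
    cases j with
    | zero => simp [hsdef, hq, coeff_expS, coeff_zero_X_mul, constantCoeff_expS]
    | succ i =>
      rw [coeff_succ_X_mul]
      simp [hsdef, hq]
  have hs0 : constantCoeff s = 2 * a := by
    rw [← coeff_zero_eq_constantCoeff_apply]
    simp [hsdef, hq, coeff_expS]
  have hq' : d⁄dX ℂ q = C (-(2 * a)) * q := by
    ext j
    rw [coeff_derivative, coeff_C_mul]
    simp only [hq, coeff_expS]
    have hfac : ((j.factorial : ℂ)) ≠ 0 := Nat.cast_ne_zero.2 j.factorial_ne_zero
    have hj1 : ((j : ℂ) + 1) ≠ 0 := by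
      have h := Nat.cast_ne_zero (R := ℂ).mpr (Nat.succ_ne_zero j)
      push_cast at h
      exact h
    rw [Nat.factorial_succ, pow_succ]
    push_cast
    field_simp
  have hstar : X * (d⁄dX ℂ s) = C (2 * a) - s - C (2 * a) * (X * s) := by
    have h := congrArg (⇑(d⁄dX ℂ)) hXs
    rw [Derivation.leibniz, PowerSeries.derivative_X, map_sub,
      Derivation.map_one_eq_zero, hq', smul_eq_mul, smul_eq_mul, mul_one] at h
    have hC : C (-(2 * a)) = -C (2 * a) := map_neg _ _
    linear_combination h - q * hC + (C (2 * a)) * hXs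
  have key := key_coeff a s h2a hs0 hstar
  have hs0' : constantCoeff s ≠ 0 := by rw [hs0]; exact h2a
  have hsv : s * s⁻¹ = 1 := PowerSeries.mul_inv_cancel s hs0'
  have keyinv : ∀ m : ℕ, coeff m ((s⁻¹) ^ (m + 1)) = (2 * a)⁻¹ :=
    fun m => eq_inv_of_mul_eq_one_right (key m)
  -- D * s = 2a + (b - a) X s
  have hA : C (b + a) - C (b - a) = C (2 * a) := by
    rw [← map_sub]
    congr 1
    ring
  have hDseq : D * s = C (2 * a) + C (b - a) * (X * s) := by
    have hX0 : (X : ℂ⟦X⟧) ≠ 0 := X_ne_zero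
    apply mul_left_cancel₀ hX0
    linear_combination hDs + (D - X * C (b - a)) * hXs + X * hA
  have hDv : D = (C (2 * a) + C (b - a) * (X * s)) * s⁻¹ := by
    rw [← hDseq, mul_assoc, hsv, mul_one]
  -- binomial expansion
  have hexpand : D ^ (n + 1) = ∑ k ∈ Finset.range (n + 1 + 1),
      C ((2 * a) ^ k * (b - a) ^ (n + 1 - k) * ((n + 1).choose k)) *
        (X ^ (n + 1 - k) * (s⁻¹) ^ k) := by
    rw [hDv, mul_pow, add_pow, Finset.sum_mul]
    apply Finset.sum_congr rfl
    intro k hk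
    have hk' : k ≤ n + 1 := Nat.lt_succ_iff.mp (Finset.mem_range.mp hk)
    have hsvp : s ^ (n + 1 - k) * (s⁻¹) ^ (n + 1) = (s⁻¹) ^ k := by
      have hv : (s⁻¹ : ℂ⟦X⟧) ^ (n + 1) = s⁻¹ ^ (n + 1 - k) * s⁻¹ ^ k := by
        rw [← pow_add]
        congr 1
        omega
      rw [hv, ← mul_assoc, ← mul_pow, hsv, one_pow, one_mul]
    have e1 : C ((2 * a) ^ k * (b - a) ^ (n + 1 - k) * ((n + 1).choose k))
        = C (2 * a) ^ k * C (b - a) ^ (n + 1 - k)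
          * (((n + 1).choose k : ℕ) : ℂ⟦X⟧) := by
      rw [map_mul, map_mul, map_pow, map_pow, map_natCast]
    rw [e1]
    linear_combination ((C (2 * a)) ^ k * (C (b - a)) ^ (n + 1 - k) *
      (((n + 1).choose k : ℕ) : ℂ⟦X⟧) * X ^ (n + 1 - k)) * hsvp
  have hco : coeff n (D ^ (n + 1)) = ∑ k ∈ Finset.range (n + 1 + 1),
      (if k = 0 then 0 else
        (2 * a) ^ k * (b - a) ^ (n + 1 - k) * ((n + 1).choose k) * (2 * a)⁻¹) := by
    rw [hexpand, map_sum]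
    apply Finset.sum_congr rfl
    intro k hk
    have hk' : k ≤ n + 1 := Nat.lt_succ_iff.mp (Finset.mem_range.mp hk)
    rw [coeff_C_mul, coeff_X_pow_mul']
    rcases Nat.eq_zero_or_pos k with hk0 | hk0
    · subst hk0
      rw [if_neg (by omega), if_pos rfl, mul_zero]
    · rw [if_pos (by omega), if_neg (by omega)]
      have hkey2 : coeff (k - 1) ((s⁻¹) ^ k) = (2 * a)⁻¹ := by
        have h := keyinv (k - 1)
        rwa [show k - 1 + 1 = k by omega] at h
      rw [show n - (n + 1 - k) = k - 1 by omega, hkey2]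
  have hbin : (b + a) ^ (n + 1) = ∑ k ∈ Finset.range (n + 1 + 1),
      (2 * a) ^ k * (b - a) ^ (n + 1 - k) * ((n + 1).choose k) := by
    calc (b + a) ^ (n + 1) = (2 * a + (b - a)) ^ (n + 1) := by ring
    _ = _ := add_pow (2 * a) (b - a) (n + 1)
  have hsplit : (b + a) ^ (n + 1) - (b - a) ^ (n + 1)
      = ∑ i ∈ Finset.range (n + 1),
        (2 * a) ^ (i + 1) * (b - a) ^ (n + 1 - (i + 1)) * (((n + 1).choose (i + 1)) : ℂ) := by
    rw [hbin, Finset.sum_range_succ']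
    simp
  rw [hco, Finset.sum_range_succ', hsplit, div_eq_mul_inv, Finset.sum_mul,
    if_pos rfl, add_zero]
  apply Finset.sum_congr rfl
  intro i hi
  rw [if_neg (Nat.succ_ne_zero i)]

end Aux

/-- formula (3.1): for `a ≠ 0`, the coefficient of `t^n` in `D_{a,b}^{n+1}`
equals `((b+a)^{n+1} − (b−a)^{n+1})/(2a) = ∑_{k=0}^{n} (b+a)^k (b−a)^{n−k}`. -/
theorem Dab_genus_CPn (a b : ℂ) (ha : a ≠ 0) (D : PowerSeries ℂ) (hD : IsDab a b D)
    (n : ℕ) :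
    PowerSeries.coeff n (D ^ (n + 1))
        = ((b + a) ^ (n + 1) - (b - a) ^ (n + 1)) / (2 * a) ∧
      PowerSeries.coeff n (D ^ (n + 1))
        = ∑ k ∈ Finset.range (n + 1), (b + a) ^ k * (b - a) ^ (n - k) := by
  obtain ⟨-, hrel⟩ | ⟨h0, -⟩ := hD
  · have h1 := main_aux a b ha D hrel n
    refine ⟨h1, ?_⟩
    rw [h1]
    have h2a : (2 : ℂ) * a ≠ 0 := mul_ne_zero two_ne_zero ha
    rw [div_eq_iff h2a]
    have hg := geom_sum₂_mul (b + a) (b - a) (n + 1)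
    simp only [Nat.add_sub_cancel] at hg
    linear_combination -hg
  · exact absurd h0 ha
end RigidGenus
end
end
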